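/- arXiv:2007.03821 — 2 statements merged into one kernel-verified Lean document; each statement's English description precedes it below -/
import Mathlib

section
/- For every integer n ≥ 1, the number of flattened partitions over [n+1] equals the number of set partitions of [n]; equivalently, there is a bijection between the set of flattened partitions over [n+1] and the set of partitions of [n] into disjoint nonempty blocks. -/
open Finset

/-- The word of a permutation `σ` of `Fin n`: the letter at (0-based) position `i`,
viewed as a natural number (the letters are `0, 1, ..., n-1`, identified with the usual
letters `1, ..., n`); junk value `0` outside the range. -/
def entry {n : ℕ} (σ : Equiv.Perm (Fin n)) (i : ℕ) : ℕ :=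
  if h : i < n then (σ ⟨i, h⟩ : ℕ) else 0

/-- Position `i` starts a run of the word `w`: either `i = 0`, or there is a
descent at position `i - 1`. -/
def WordRunStart (w : ℕ → ℕ) (i : ℕ) : Prop :=
  i = 0 ∨ w i < w (i - 1)

instance (w : ℕ → ℕ) (i : ℕ) : Decidable (WordRunStart w i) :=
  inferInstanceAs (Decidable (i = 0 ∨ w i < w (i - 1)))

/-- The number of runs of the length-`m` word `w` (maximal consecutive increasing subwords). -/
def wordRuns (w : ℕ → ℕ) (m : ℕ) : ℕ :=
  ((Finset.range m).filter fun i => WordRunStart w i).card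

/-- The length-`m` word `w` is flattened: the first entries of its runs,
read from left to right, increase. -/
def WordFlattened (w : ℕ → ℕ) (m : ℕ) : Prop :=
  ∀ i < m, ∀ j < m, WordRunStart w i → WordRunStart w j → i < j → w i < w j

instance (w : ℕ → ℕ) (m : ℕ) : Decidable (WordFlattened w m) :=
  inferInstanceAs (Decidable (∀ i < m, ∀ j < m,
    WordRunStart w i → WordRunStart w j → i < j → w i < w j))

/-- Position `i` (0-based) starts a run of the permutation `σ`. -/
def IsRunStart {n : ℕ} (σ : Equiv.Perm (Fin n)) (i : ℕ) : Prop :=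
  i < n ∧ WordRunStart (entry σ) i

instance {n : ℕ} (σ : Equiv.Perm (Fin n)) (i : ℕ) : Decidable (IsRunStart σ i) :=
  inferInstanceAs (Decidable (i < n ∧ WordRunStart (entry σ) i))

/-- The number of runs of the permutation `σ`. -/
def runCount {n : ℕ} (σ : Equiv.Perm (Fin n)) : ℕ :=
  wordRuns (entry σ) n

/-- `σ` is a flattened partition. -/
def IsFlattened {n : ℕ} (σ : Equiv.Perm (Fin n)) : Prop :=
  WordFlattened (entry σ) n

instance {n : ℕ} (σ : Equiv.Perm (Fin n)) : Decidable (IsFlattened σ) :=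
  inferInstanceAs (Decidable (WordFlattened (entry σ) n))

/-- `flatSet n k`: the set `F_{n,k}` of flattened partitions over `[n]` with exactly `k` runs. -/
def flatSet (n k : ℕ) : Finset (Equiv.Perm (Fin n)) :=
  Finset.univ.filter fun σ => IsFlattened σ ∧ runCount σ = k

/-- `f n k = |F_{n,k}|`, the number of flattened partitions over `[n]` with exactly `k` runs. -/
def f (n k : ℕ) : ℕ := (flatSet n k).card

namespace FlatAux

/-! ### Section A: generic rank counting on finsets of naturals -/

lemma rank_mono_generic {S : Finset ℕ} {v w : ℕ} (h : v ≤ w) :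
    #(S.filter (· ≤ v)) ≤ #(S.filter (· ≤ w)) := by
  apply card_le_card
  intro x hx
  simp only [mem_filter] at hx ⊢
  exact ⟨hx.1, by omega⟩

lemma rank_lt_generic {S : Finset ℕ} {v c : ℕ} (hc : c ∈ S) (h : v < c) :
    #(S.filter (· ≤ v)) < #(S.filter (· ≤ c)) := by
  apply card_lt_card
  rw [Finset.ssubset_iff_of_subset]
  · exact ⟨c, mem_filter.2 ⟨hc, le_refl c⟩, fun hmem => by
      simp only [mem_filter] at hmem; omega⟩
  · intro x hx
    simp only [mem_filter] at hx ⊢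
    exact ⟨hx.1, by omega⟩

lemma le_of_rank_le_generic {S : Finset ℕ} {c v : ℕ} (hc : c ∈ S)
    (h : #(S.filter (· ≤ c)) ≤ #(S.filter (· ≤ v))) : c ≤ v := by
  by_contra hvc
  exact absurd h (not_le.2 (rank_lt_generic hc (by omega)))

lemma exists_rank_generic (S : Finset ℕ) {t : ℕ} (h1 : 1 ≤ t) (h2 : t ≤ #S) :
    ∃ c ∈ S, #(S.filter (· ≤ c)) = t := by
  classical
  set R := S.image (fun c => #(S.filter (· ≤ c))) with hR
  have hinj : Set.InjOn (fun c => #(S.filter (· ≤ c))) S := by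
    intro a ha b hb hab
    simp only at hab
    have h1 := le_of_rank_le_generic ha (le_of_eq hab)
    have h2 := le_of_rank_le_generic hb (ge_of_eq hab)
    omega
  have hcard : #R = #S := card_image_of_injOn hinj
  have hsub : R ⊆ Finset.Icc 1 #S := by
    intro x hx
    rw [hR, mem_image] at hx
    obtain ⟨c, hc, rfl⟩ := hx
    exact mem_Icc.2 ⟨card_pos.2 ⟨c, mem_filter.2 ⟨hc, le_refl c⟩⟩,
      card_le_card (filter_subset _ _)⟩
  have heq : R = Finset.Icc 1 #S := by
    apply Finset.eq_of_subset_of_card_le hsub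
    rw [hcard, Nat.card_Icc]
    omega
  have : t ∈ R := heq ▸ (mem_Icc.2 ⟨h1, h2⟩)
  rw [hR, mem_image] at this
  obtain ⟨c, hc, hct⟩ := this
  exact ⟨c, hc, hct⟩

/-! ### Section B: word-level definitions and lemmas -/

variable (e : ℕ → ℕ) (m : ℕ)

/-- Minimum entry of the word on positions `[i, m)`; junk `0` if `i ≥ m`. -/
def sminN (i : ℕ) : ℕ :=
  if h : i < m then ((Finset.Ico i m).image e).min'
    ⟨e i, mem_image_of_mem e (mem_Ico.2 ⟨le_refl i, h⟩)⟩ else 0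

/-- Next run start strictly after `i` (or `m` if none); junk `0` if `i ≥ m`. -/
def nsN (i : ℕ) : ℕ :=
  if h : i < m then
    Nat.find (⟨m, h, Or.inl rfl⟩ : ∃ j, i < j ∧ (j = m ∨ WordRunStart e j)) else 0

/-- Greatest run start `≤ i`. -/
def prevN (i : ℕ) : ℕ := Nat.findGreatest (fun q => WordRunStart e q) i

/-- Number of run starts in `[0, i]`. -/
def rhoN (i : ℕ) : ℕ := #((Finset.range (i + 1)).filter fun t => WordRunStart e t)

variable {e m}

lemma sminN_le {i q : ℕ} (hi : i < m) (hiq : i ≤ q) (hq : q < m) :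
    sminN e m i ≤ e q := by
  rw [sminN, dif_pos hi]
  exact min'_le _ _ (mem_image_of_mem e (mem_Ico.2 ⟨hiq, hq⟩))

lemma sminN_mem {i : ℕ} (hi : i < m) :
    ∃ q, i ≤ q ∧ q < m ∧ e q = sminN e m i := by
  rw [sminN, dif_pos hi]
  have := min'_mem ((Finset.Ico i m).image e)
    ⟨e i, mem_image_of_mem e (mem_Ico.2 ⟨le_refl i, hi⟩)⟩
  rw [mem_image] at this
  obtain ⟨q, hq, hqe⟩ := this
  exact ⟨q, (mem_Ico.1 hq).1, (mem_Ico.1 hq).2, hqe⟩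

lemma sminN_le_self {i : ℕ} (hi : i < m) : sminN e m i ≤ e i :=
  sminN_le hi (le_refl i) hi

lemma nsN_gt {i : ℕ} (hi : i < m) : i < nsN e m i := by
  rw [nsN, dif_pos hi]
  exact (Nat.find_spec (⟨m, hi, Or.inl rfl⟩ :
    ∃ j, i < j ∧ (j = m ∨ WordRunStart e j))).1

lemma nsN_le {i : ℕ} (hi : i < m) : nsN e m i ≤ m := by
  rw [nsN, dif_pos hi]
  exact Nat.find_min' _ ⟨hi, Or.inl rfl⟩

lemma nsN_spec {i : ℕ} (hi : i < m) :
    nsN e m i = m ∨ WordRunStart e (nsN e m i) := by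
  rw [nsN, dif_pos hi]
  exact (Nat.find_spec (⟨m, hi, Or.inl rfl⟩ :
    ∃ j, i < j ∧ (j = m ∨ WordRunStart e j))).2

lemma nsN_min {i t : ℕ} (hi : i < m) (hit : i < t) (ht : t < nsN e m i) :
    ¬ WordRunStart e t := by
  rw [nsN, dif_pos hi] at ht
  have := Nat.find_min (⟨m, hi, Or.inl rfl⟩ :
    ∃ j, i < j ∧ (j = m ∨ WordRunStart e j)) ht
  intro hrs
  exact this ⟨hit, Or.inr hrs⟩

lemma nsN_unique {i q : ℕ} (hi : i < m) (hiq : i < q)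
    (hq : q = m ∨ WordRunStart e q) (hmin : ∀ t, i < t → t < q → ¬ (t = m ∨ WordRunStart e t)) :
    nsN e m i = q := by
  rw [nsN, dif_pos hi]
  apply le_antisymm (Nat.find_min' _ ⟨hiq, hq⟩)
  rw [Nat.le_find_iff]
  intro t ht hspec
  rcases Nat.lt_or_ge i t with h | h
  · exact hmin t h ht hspec.2
  · omega

lemma rs_zero : WordRunStart e 0 := Or.inl rfl

lemma prevN_le {i : ℕ} : prevN e i ≤ i := Nat.findGreatest_le i

lemma prevN_rs {i : ℕ} : WordRunStart e (prevN e i) :=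
  Nat.findGreatest_spec (Nat.zero_le i) rs_zero

lemma prevN_max {i t : ℕ} (ht : WordRunStart e t) (hti : t ≤ i) : t ≤ prevN e i :=
  Nat.le_findGreatest hti ht

section withHyps

variable (hinj : ∀ i < m, ∀ j < m, e i = e j → i = j)
variable (hsurj : ∀ v < m, ∃ i, i < m ∧ e i = v)
variable (hlt : ∀ i < m, e i < m)
variable (hflat : WordFlattened e m)

include hinj in
lemma inc_of_no_rs : ∀ {a b : ℕ}, a ≤ b → b < m →
    (∀ t, a < t → t ≤ b → ¬ WordRunStart e t) → a = b ∨ e a < e b := by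
  intro a b
  induction b with
  | zero => intro h _ _; omega
  | succ b ih =>
    intro hab hbm hno
    rcases Nat.eq_or_lt_of_le hab with h | h
    · exact Or.inl h
    · right
      have hab' : a ≤ b := by omega
      have hbb : e b < e (b + 1) := by
        have hnrs := hno (b + 1) (by omega) (le_refl _)
        rw [WordRunStart] at hnrs
        push_neg at hnrs
        have := hnrs.2
        simp only [Nat.add_sub_cancel] at this
        have hne : e b ≠ e (b + 1) := fun hh => by
          have := hinj b (by omega) (b + 1) hbm hh; omega
        omega
      rcases ih hab' (by omega) (fun t h1 h2 => hno t h1 (by omega)) with h' | h'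
      · exact h' ▸ hbb
      · omega

include hflat in
lemma rs_mono {i j : ℕ} (hij : i ≤ j) (hj : j < m)
    (hi : WordRunStart e i) (hjs : WordRunStart e j) : e i ≤ e j := by
  rcases Nat.eq_or_lt_of_le hij with h | h
  · exact le_of_eq (congrArg e h)
  · exact le_of_lt (hflat i (by omega) j hj hi hjs h)

include hinj hflat in
lemma e_ge_of_rs {q t : ℕ} (hq : WordRunStart e q) (hqt : q ≤ t) (ht : t < m) :
    e q ≤ e t := by
  set q' := prevN e t with hq'
  have hq's : WordRunStart e q' := prevN_rs
  have hq'le : q' ≤ t := prevN_le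
  have h1 : q ≤ q' := prevN_max hq hqt
  have h2 : e q ≤ e q' := rs_mono hflat h1 (by omega) hq hq's
  have h3 : q' = t ∨ e q' < e t := by
    apply inc_of_no_rs hinj hq'le ht
    intro s hs1 hs2 hrs
    have := prevN_max (e := e) hrs hs2
    omega
  rcases h3 with h | h
  · exact h ▸ h2
  · omega

include hinj hflat in
lemma smin_cases {i : ℕ} (hi : i < m) :
    sminN e m i = e i ∨
    (nsN e m i < m ∧ WordRunStart e (nsN e m i) ∧ e (nsN e m i) < e i ∧
      sminN e m i = e (nsN e m i)) := by
  obtain ⟨q, hiq, hqm, hqe⟩ := sminN_mem (e := e) hi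
  by_cases hq : q < nsN e m i
  · left
    rcases Nat.eq_or_lt_of_le hiq with h | h
    · rw [← hqe, h]
    · have hnors : ∀ t, i < t → t ≤ q → ¬ WordRunStart e t := by
        intro t h1 h2
        exact nsN_min (e := e) (m := m) hi h1 (by omega)
      rcases inc_of_no_rs hinj hiq hqm hnors with h' | h'
      · rw [← hqe, ← h']
      · have hss := sminN_le_self (e := e) hi
        omega
  · -- q ≥ ns
    push_neg at hq
    have hnsm : nsN e m i < m := by
      rcases Nat.eq_or_lt_of_le (nsN_le (e := e) hi) with h | h
      · omega
      · exact h
    have hrs : WordRunStart e (nsN e m i) := by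
      rcases nsN_spec (e := e) hi with h | h
      · omega
      · exact h
    have h1 : e (nsN e m i) ≤ e q := e_ge_of_rs hinj hflat hrs hq hqm
    have h2 : sminN e m i ≤ e (nsN e m i) :=
      sminN_le hi (le_of_lt (nsN_gt hi)) hnsm
    have h3 : sminN e m i = e (nsN e m i) := by omega
    have hne : e (nsN e m i) ≠ e i := fun hh => by
      have hu1 := hinj _ hnsm _ hi hh
      have hu2 := nsN_gt (e := e) hi
      omega
    have h4 : sminN e m i ≤ e i := sminN_le_self hi
    right
    exact ⟨hnsm, hrs, by omega, h3⟩

include hinj hsurj hflat in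
lemma e_zero (hm : 0 < m) : e 0 = 0 := by
  obtain ⟨i, him, hie⟩ := hsurj 0 hm
  rcases Nat.eq_zero_or_pos i with h | h
  · exact h ▸ hie
  · exfalso
    have hrs : WordRunStart e i := by
      right
      have : e (i - 1) ≠ 0 := fun hh => by
        have := hinj (i - 1) (by omega) i him (by omega)
        omega
      omega
    have := hflat 0 hm i him rs_zero hrs h
    omega

lemma rhoN_mono {i j : ℕ} (hij : i ≤ j) : rhoN e i ≤ rhoN e j :=
  card_le_card (filter_subset_filter _ (range_subset_range.2 (by omega)))

lemma rhoN_lt {i t : ℕ} (hit : i < t) (ht : WordRunStart e t) :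
    rhoN e i < rhoN e t := by
  apply card_lt_card
  constructor
  · exact filter_subset_filter _ (range_subset_range.2 (by omega))
  · intro hsub
    have : t ∈ (Finset.range (t + 1)).filter fun s => WordRunStart e s :=
      mem_filter.2 ⟨mem_range.2 (by omega), ht⟩
    have := hsub this
    simp only [mem_filter, mem_range] at this
    omega

lemma rhoN_eq_of_no_rs {i j : ℕ} (hij : i ≤ j)
    (h : ∀ t, i < t → t ≤ j → ¬ WordRunStart e t) : rhoN e i = rhoN e j := by
  apply le_antisymm (rhoN_mono hij)
  apply card_le_card
  intro t hmem
  simp only [mem_filter, mem_range] at hmem ⊢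
  refine ⟨?_, hmem.2⟩
  by_contra hc
  exact h t (by omega) (by omega) hmem.2

lemma rhoN_pos {i : ℕ} : 0 < rhoN e i :=
  card_pos.2 ⟨0, mem_filter.2 ⟨mem_range.2 (by omega), rs_zero⟩⟩

lemma rhoN_succ_of {i j : ℕ} (hij : i < j) (hrs : WordRunStart e j)
    (h : ∀ t, i < t → t < j → ¬ WordRunStart e t) : rhoN e j = rhoN e i + 1 := by
  have h1 : rhoN e i = rhoN e (j - 1) := by
    apply rhoN_eq_of_no_rs (by omega)
    intro t h1 h2
    exact h t h1 (by omega)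
  have h2 : rhoN e j = rhoN e (j - 1) + 1 := by
    have hj : j = (j - 1) + 1 := by omega
    rw [rhoN, hj]
    rw [show (j-1)+1+1 = (j-1+1)+1 from rfl, Finset.range_add_one, filter_insert]
    rw [if_pos (by rw [← hj]; exact hrs)]
    rw [card_insert_of_notMem (by simp [mem_filter])]
    rfl
  omega

end withHyps

/-! ### Section C: the suffix-minimum function of a word -/

variable (e m) in
/-- Position of the value `v` in the word (least `i < m` with `e i = v`, else `m`). -/
def posN (v : ℕ) : ℕ :=
  Nat.find (⟨m, Or.inl (le_refl m)⟩ : ∃ i, m ≤ i ∨ (i < m ∧ e i = v))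

variable (e m) in
/-- The suffix-minimum function: `pNW v` is the min of the word over positions `≥ posN v`. -/
def pNW (v : ℕ) : ℕ := sminN e m (posN e m v)

section withHyps2

variable (hinj : ∀ i < m, ∀ j < m, e i = e j → i = j)
variable (hsurj : ∀ v < m, ∃ i, i < m ∧ e i = v)
variable (hlt : ∀ i < m, e i < m)
variable (hflat : WordFlattened e m)

include hsurj in
lemma posN_lt {v : ℕ} (hv : v < m) : posN e m v < m ∧ e (posN e m v) = v := by
  obtain ⟨i, him, hie⟩ := hsurj v hv
  have h1 : posN e m v ≤ i := Nat.find_min' _ (Or.inr ⟨him, hie⟩)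
  have h2 : m ≤ posN e m v ∨ (posN e m v < m ∧ e (posN e m v) = v) :=
    Nat.find_spec (⟨m, Or.inl (le_refl m)⟩ : ∃ i, m ≤ i ∨ (i < m ∧ e i = v))
  rcases h2 with h | h
  · omega
  · exact h

include hinj in
lemma posN_e {i : ℕ} (hi : i < m) : posN e m (e i) = i := by
  have h1 : posN e m (e i) ≤ i := Nat.find_min' _ (Or.inr ⟨hi, rfl⟩)
  have h2 : m ≤ posN e m (e i) ∨ (posN e m (e i) < m ∧ e (posN e m (e i)) = e i) :=
    Nat.find_spec (⟨m, Or.inl (le_refl m)⟩ : ∃ j, m ≤ j ∨ (j < m ∧ e j = e i))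
  rcases h2 with h | h
  · omega
  · exact hinj _ h.1 _ hi h.2

include hlt in
lemma posN_out {v : ℕ} (hv : m ≤ v) : posN e m v = m := by
  apply le_antisymm (Nat.find_min' _ (Or.inl (le_refl m)))
  rw [Nat.le_find_iff]
  intro t ht hspec
  rcases hspec with h | h
  · omega
  · have := hlt t h.1
    omega

lemma sminN_out {i : ℕ} (hi : m ≤ i) : sminN e m i = 0 := by
  rw [sminN, dif_neg (by omega)]

include hlt in
lemma pNW_out {v : ℕ} (hv : m ≤ v) : pNW e m v = 0 := by
  rw [pNW, posN_out hlt hv, sminN_out (le_refl m)]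

include hsurj in
lemma pNW_le {v : ℕ} (hv : v < m) : pNW e m v ≤ v := by
  obtain ⟨h1, h2⟩ := posN_lt hsurj hv
  rw [pNW]
  conv_rhs => rw [← h2]
  exact sminN_le_self h1

include hsurj hlt in
lemma pNW_lt {v : ℕ} (hv : v < m) : pNW e m v < m := by
  obtain ⟨h1, _⟩ := posN_lt hsurj hv
  obtain ⟨q, _, hq2, hq3⟩ := sminN_mem (e := e) h1
  rw [pNW, ← hq3]
  exact hlt q hq2

include hinj hsurj in
lemma pNW_idem {v : ℕ} (hv : v < m) : pNW e m (pNW e m v) = pNW e m v := by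
  obtain ⟨h1, h2⟩ := posN_lt hsurj hv
  obtain ⟨q, hq1, hq2, hq3⟩ := sminN_mem (e := e) h1
  have hpos : posN e m (pNW e m v) = q := by
    rw [pNW, ← hq3, posN_e hinj hq2]
  rw [pNW, hpos]
  apply le_antisymm
  · rw [pNW, ← hq3]
    exact sminN_le_self hq2
  · obtain ⟨q', hq'1, hq'2, hq'3⟩ := sminN_mem (e := e) hq2
    rw [← hq'3, pNW]
    exact sminN_le h1 (by omega) hq'2

include hinj hsurj hflat in
lemma pNW_zero {v : ℕ} (hm : 0 < m) (hv : v < m) (h : pNW e m v = 0) : v = 0 := by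
  obtain ⟨h1, h2⟩ := posN_lt hsurj hv
  obtain ⟨q, hq1, hq2, hq3⟩ := sminN_mem (e := e) h1
  rw [pNW] at h
  have hq0 : e q = 0 := by omega
  have hez := e_zero hinj hsurj hflat hm
  have : q = 0 := hinj q hq2 0 hm (by omega)
  have : posN e m v = 0 := by omega
  rw [this] at h2
  omega

end withHyps2

/-! ### Section D: the combinatorial data attached to an idempotent decreasing map -/

variable (m) in
/-- The set of labels with a nontrivial fiber. -/
def SNp (p : ℕ → ℕ) : Finset ℕ :=
  (Finset.range m).filter fun c => ∃ v, v < m ∧ p v = c ∧ v ≠ c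

variable (m) in
/-- The rank of `c`: the number of elements of `SNp` that are `≤ c`. -/
def rankN (p : ℕ → ℕ) (c : ℕ) : ℕ := #((SNp m p).filter (· ≤ c))

variable (m) in
/-- The run index of the value `v` (1-based). -/
def rN (p : ℕ → ℕ) (v : ℕ) : ℕ :=
  if p v = v then rankN m p v + 1 else rankN m p (p v)

variable (m) in
/-- The sorting key of the value `v`. -/
def KN (p : ℕ → ℕ) (v : ℕ) : ℕ := rN m p v * m + v

section withHypsP

variable {p : ℕ → ℕ}
variable (hpm : ∀ v < m, p v < m)
variable (hple : ∀ v < m, p v ≤ v)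
variable (hpidem : ∀ v < m, p (p v) = p v)
variable (hpzero : ∀ v < m, p v = 0 → v = 0)

lemma mem_SNp {c : ℕ} : c ∈ SNp m p ↔ c < m ∧ ∃ v, v < m ∧ p v = c ∧ v ≠ c := by
  rw [SNp, mem_filter, mem_range]

include hpidem in
lemma SNp_fixed {c : ℕ} (hc : c ∈ SNp m p) : p c = c := by
  rw [mem_SNp] at hc
  obtain ⟨hcm, v, hv, hpv, hne⟩ := hc
  rw [← hpv]
  exact hpidem v hv

include hpzero in
lemma SNp_ne_zero {c : ℕ} (hc : c ∈ SNp m p) : c ≠ 0 := by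
  rw [mem_SNp] at hc
  obtain ⟨hcm, v, hv, hpv, hne⟩ := hc
  intro h0
  exact hne (by rw [hpzero v hv (by omega)]; omega)

lemma SNp_lt_m {c : ℕ} (hc : c ∈ SNp m p) : c < m := (mem_SNp.1 hc).1

lemma rankN_pos {c : ℕ} (hc : c ∈ SNp m p) : 1 ≤ rankN m p c :=
  card_pos.2 ⟨c, mem_filter.2 ⟨hc, le_refl c⟩⟩

lemma rankN_le_card {c : ℕ} : rankN m p c ≤ #(SNp m p) :=
  card_le_card (filter_subset _ _)

lemma rankN_mono {v w : ℕ} (h : v ≤ w) : rankN m p v ≤ rankN m p w :=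
  rank_mono_generic h

lemma rankN_lt {v c : ℕ} (hc : c ∈ SNp m p) (h : v < c) : rankN m p v < rankN m p c :=
  rank_lt_generic hc h

lemma le_of_rankN_le {c v : ℕ} (hc : c ∈ SNp m p) (h : rankN m p c ≤ rankN m p v) :
    c ≤ v := le_of_rank_le_generic hc h

lemma rankN_inj {c d : ℕ} (hc : c ∈ SNp m p) (hd : d ∈ SNp m p)
    (h : rankN m p c = rankN m p d) : c = d := by
  have h1 := le_of_rankN_le hc (le_of_eq h)
  have h2 := le_of_rankN_le hd (ge_of_eq h)
  omega

lemma exists_rankN {t : ℕ} (h1 : 1 ≤ t) (h2 : t ≤ #(SNp m p)) :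
    ∃ c ∈ SNp m p, rankN m p c = t :=
  exists_rank_generic _ h1 h2

include hpm hple in
lemma pv_mem_SNp {v : ℕ} (hv : v < m) (hne : p v ≠ v) : p v ∈ SNp m p ∧ p v < v := by
  have h1 := hple v hv
  exact ⟨mem_SNp.2 ⟨by have := hpm v hv; omega, v, hv, rfl, fun h => hne h.symm⟩, by omega⟩

include hpidem in
lemma rN_SNp {c : ℕ} (hc : c ∈ SNp m p) : rN m p c = rankN m p c + 1 := by
  rw [rN, if_pos (SNp_fixed hpidem hc)]

include hpm hple in
lemma rN_pos {v : ℕ} (hv : v < m) : 1 ≤ rN m p v := by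
  rw [rN]
  split
  · omega
  · next hne => exact rankN_pos (pv_mem_SNp hpm hple hv hne).1

lemma rN_le {v : ℕ} : rN m p v ≤ #(SNp m p) + 1 := by
  rw [rN]
  split
  · have := rankN_le_card (m := m) (p := p) (c := v); omega
  · have := rankN_le_card (m := m) (p := p) (c := p v); omega

include hple hpzero in
lemma rN_zero (hm : 0 < m) : rN m p 0 = 1 := by
  have hp0 : p 0 = 0 := by have := hple 0 hm; omega
  rw [rN, if_pos hp0]
  have : rankN m p 0 = 0 := by
    rw [rankN, Finset.card_eq_zero, Finset.filter_eq_empty_iff]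
    intro c hc
    have h0 := SNp_ne_zero hpzero hc
    omega
  omega

lemma KN_lt_of_rN_lt {v w : ℕ} (hv : v < m) (h : rN m p v < rN m p w) :
    KN m p v < KN m p w := by
  rw [KN, KN]
  calc rN m p v * m + v < rN m p v * m + m := by omega
    _ = (rN m p v + 1) * m := by ring
    _ ≤ rN m p w * m := Nat.mul_le_mul_right m h
    _ ≤ rN m p w * m + w := Nat.le_add_right _ _

lemma KN_inj {v w : ℕ} (hv : v < m) (hw : w < m) (h : KN m p v = KN m p w) : v = w := by
  rcases Nat.lt_trichotomy (rN m p v) (rN m p w) with hr | hr | hr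
  · exact absurd h (Nat.ne_of_lt (KN_lt_of_rN_lt hv hr))
  · rw [KN, KN, hr] at h
    omega
  · exact absurd h.symm (Nat.ne_of_lt (KN_lt_of_rN_lt hw hr))

lemma rN_le_of_KN_le {v w : ℕ} (hw : w < m) (h : KN m p v ≤ KN m p w) :
    rN m p v ≤ rN m p w := by
  by_contra hc
  push_neg at hc
  exact absurd h (not_le.2 (KN_lt_of_rN_lt hw hc))

lemma lt_of_KN_lt_of_rN_eq {v w : ℕ} (h : KN m p v < KN m p w)
    (hr : rN m p v = rN m p w) : v < w := by
  rw [KN, KN, hr] at h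
  omega

lemma le_of_KN_le_of_rN_eq {v w : ℕ} (h : KN m p v ≤ KN m p w)
    (hr : rN m p v = rN m p w) : v ≤ w := by
  rw [KN, KN, hr] at h
  omega

include hpm hple hpidem in
/-- The minimum of the `(t+1)`-st `r`-class (`t ≥ 1`) lies in `SNp`, has rank `t`, and
has a nontrivial fiber element above it in class `t`. -/
lemma classMin_spec {t v : ℕ} (hv : v < m) (ht : 1 ≤ t) (hrv : rN m p v = t + 1)
    (hmin : ∀ w, w < m → rN m p w = t + 1 → v ≤ w) :
    v ∈ SNp m p ∧ rankN m p v = t ∧ ∃ x, x < m ∧ p x = v ∧ v < x ∧ rN m p x = t := by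
  have hSt : t ≤ #(SNp m p) := by
    rw [rN] at hrv
    split at hrv
    · have := rankN_le_card (m := m) (p := p) (c := v); omega
    · next hne =>
      have hmem := (pv_mem_SNp hpm hple hv hne).1
      have := rankN_le_card (m := m) (p := p) (c := p v)
      omega
  obtain ⟨c, hcS, hcrank⟩ := exists_rankN (p := p) ht hSt
  have hcm : c < m := SNp_lt_m hcS
  have hrc : rN m p c = t + 1 := by rw [rN_SNp hpidem hcS, hcrank]
  have hvc : v ≤ c := hmin c hcm hrc
  have hveq : v = c := by
    rw [rN] at hrv
    split at hrv
    · next hfix =>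
      -- rank v = t = rank c, so c ≤ v
      have hrvt : rankN m p v = t := by omega
      have hcv : c ≤ v := le_of_rankN_le hcS (by rw [hcrank, hrvt])
      omega
    · next hne =>
      -- rank (p v) = t + 1 > t = rank c, so c < p v < v ≤ c, contradiction
      exfalso
      have hpv := (pv_mem_SNp hpm hple hv hne).1
      have hlt2 := (pv_mem_SNp hpm hple hv hne).2
      have : c ≤ p v := le_of_rankN_le hcS (by omega)
      omega
  subst hveq
  refine ⟨hcS, hcrank, ?_⟩
  obtain ⟨hvm2, x, hxm, hpx, hxne⟩ := mem_SNp.1 hcS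
  refine ⟨x, hxm, hpx, ?_, ?_⟩
  · have := hple x hxm; omega
  · rw [rN, if_neg (by omega), hpx, hcrank]

/-- A fixed point `v` is strictly below any member of `SNp` of rank `rank v + 1`. -/
lemma fixed_lt_next {v c : ℕ} (hc : c ∈ SNp m p)
    (hrank : rankN m p c = rankN m p v + 1) : v < c := by
  by_contra h
  push_neg at h
  have := rankN_mono (m := m) (p := p) h
  omega

end withHypsP

/-! ### Section E: a flattened word is sorted by the key of its suffix-min function -/

section SecE

variable (hinj : ∀ i < m, ∀ j < m, e i = e j → i = j)
variable (hsurj : ∀ v < m, ∃ i, i < m ∧ e i = v)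
variable (hlt : ∀ i < m, e i < m)
variable (hflat : WordFlattened e m)

include hinj hsurj hlt hflat in
lemma mem_SNp_iff_rs {c : ℕ} :
    c ∈ SNp m (pNW e m) ↔ ∃ q, 0 < q ∧ q < m ∧ WordRunStart e q ∧ e q = c := by
  constructor
  · intro hc
    obtain ⟨hcm, v, hv, hpv, hne⟩ := mem_SNp.1 hc
    obtain ⟨hi, hei⟩ := posN_lt hsurj hv
    rcases smin_cases hinj hflat hi with h | ⟨h1, h2, h3, h4⟩
    · exfalso
      apply hne
      rw [← hpv, pNW, h, hei]
    · refine ⟨nsN e m (posN e m v), ?_, h1, h2, ?_⟩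
      · have := nsN_gt (e := e) hi
        omega
      · rw [← h4, ← hpv, pNW]
  · rintro ⟨q, hq0, hqm, hrs, heq⟩
    have hq1m : q - 1 < m := by omega
    have hdesc : e q < e (q - 1) := by
      rcases hrs with h | h
      · omega
      · exact h
    have hns : nsN e m (q - 1) = q := by
      apply nsN_unique hq1m (by omega) (Or.inr hrs)
      intro t h1 h2 h3
      omega
    have hsm : sminN e m (q - 1) = e q := by
      rcases smin_cases hinj hflat hq1m with h | ⟨h1, h2, h3, h4⟩
      · exfalso
        have := sminN_le (e := e) hq1m (by omega) hqm
        omega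
      · rw [h4, hns]
    have hvm : e (q - 1) < m := hlt _ hq1m
    apply mem_SNp.2
    refine ⟨by rw [← heq]; exact hlt q hqm, e (q - 1), hvm, ?_, ?_⟩
    · rw [pNW, posN_e hinj hq1m, hsm, heq]
    · omega

include hinj hsurj hlt hflat in
lemma rank_rs {q : ℕ} (hqm : q < m) (hrs : WordRunStart e q) :
    rankN m (pNW e m) (e q) + 1 = rhoN e q := by
  classical
  set A := (Finset.range (q + 1)).filter (fun t => WordRunStart e t ∧ t ≠ 0) with hA
  have step1 : (SNp m (pNW e m)).filter (· ≤ e q) = A.image e := by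
    ext c
    simp only [mem_filter, mem_image, hA, mem_range]
    constructor
    · rintro ⟨hc, hle⟩
      obtain ⟨t, ht0, htm, htrs, hte⟩ := (mem_SNp_iff_rs hinj hsurj hlt hflat).1 hc
      have htq : t ≤ q := by
        by_contra hcon
        push_neg at hcon
        have := hflat q hqm t htm hrs htrs hcon
        omega
      exact ⟨t, ⟨by omega, htrs, by omega⟩, hte⟩
    · rintro ⟨t, ⟨ht1, ht2, ht3⟩, hte⟩
      have htm : t < m := by omega
      refine ⟨(mem_SNp_iff_rs hinj hsurj hlt hflat).2 ⟨t, by omega, htm, ht2, hte⟩, ?_⟩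
      rw [← hte]
      exact rs_mono hflat (by omega) hqm ht2 hrs
  have step2 : #(A.image e) = #A := by
    apply card_image_of_injOn
    intro a ha b hb hab
    simp only [hA, mem_coe, mem_filter, mem_range] at ha hb
    exact hinj a (by omega) b (by omega) hab
  have step3 : A = ((Finset.range (q + 1)).filter (fun t => WordRunStart e t)).erase 0 := by
    ext t
    simp only [hA, mem_filter, mem_erase, mem_range]
    tauto
  have h0mem : (0 : ℕ) ∈ (Finset.range (q + 1)).filter (fun t => WordRunStart e t) :=
    mem_filter.2 ⟨mem_range.2 (by omega), rs_zero⟩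
  have step4 : #A = rhoN e q - 1 := by
    rw [step3, card_erase_of_mem h0mem]
    rfl
  have hpos : 0 < rhoN e q := rhoN_pos
  rw [rankN, step1, step2, step4]
  omega

include hinj hsurj hlt hflat in
lemma rN_eq_rhoN {i : ℕ} (hi : i < m) : rN m (pNW e m) (e i) = rhoN e i := by
  have hpos := posN_e hinj hi
  rcases smin_cases hinj hflat hi with h | ⟨h1, h2, h3, h4⟩
  · -- fixed point case
    have hfix : pNW e m (e i) = e i := by rw [pNW, hpos, h]
    rw [rN, if_pos hfix]
    set q := prevN e i with hq
    have hqrs : WordRunStart e q := prevN_rs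
    have hqle : q ≤ i := prevN_le
    have hqm : q < m := by omega
    have heqi : e q ≤ e i := by
      rcases inc_of_no_rs hinj hqle hi
        (fun t h1 h2 hrs => by have := prevN_max (e := e) hrs h2; omega) with h' | h'
      · exact le_of_eq (congrArg e h')
      · omega
    have hsets : (SNp m (pNW e m)).filter (· ≤ e i) =
        (SNp m (pNW e m)).filter (· ≤ e q) := by
      ext c
      simp only [mem_filter]
      constructor
      · rintro ⟨hc, hle⟩
        refine ⟨hc, ?_⟩
        obtain ⟨t, ht0, htm, htrs, hte⟩ := (mem_SNp_iff_rs hinj hsurj hlt hflat).1 hc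
        have hti : t ≤ i := by
          by_contra hcon
          push_neg at hcon
          have hs1 : sminN e m i ≤ e t := sminN_le hi (by omega) htm
          have : c = e i := by omega
          have := hinj t htm i hi (by omega)
          omega
        have htq : t ≤ q := prevN_max htrs hti
        rw [← hte]
        exact rs_mono hflat htq hqm htrs hqrs
      · rintro ⟨hc, hle⟩
        exact ⟨hc, by omega⟩
    have hr1 : rankN m (pNW e m) (e i) = rankN m (pNW e m) (e q) := by
      rw [rankN, rankN, hsets]
    have hr2 := rank_rs hinj hsurj hlt hflat hqm hqrs
    have hr3 : rhoN e q = rhoN e i :=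
      rhoN_eq_of_no_rs hqle (fun t h1 h2 hrs => by have := prevN_max (e := e) hrs h2; omega)
    omega
  · -- non-fixed case
    have hne : pNW e m (e i) ≠ e i := by
      rw [pNW, hpos, h4]
      omega
    rw [rN, if_neg hne]
    have hpv : pNW e m (e i) = e (nsN e m i) := by rw [pNW, hpos, h4]
    rw [hpv]
    have hr2 := rank_rs hinj hsurj hlt hflat h1 h2
    have hr3 : rhoN e (nsN e m i) = rhoN e i + 1 :=
      rhoN_succ_of (nsN_gt hi) h2 (fun t ht1 ht2 => nsN_min hi ht1 ht2)
    omega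

include hinj hsurj hlt hflat in
lemma claim1 {i j : ℕ} (hij : i < j) (hj : j < m) :
    KN m (pNW e m) (e i) < KN m (pNW e m) (e j) := by
  have hi : i < m := by omega
  by_cases hex : ∃ t, i < t ∧ t ≤ j ∧ WordRunStart e t
  · obtain ⟨t, h1, h2, h3⟩ := hex
    apply KN_lt_of_rN_lt (hlt i hi)
    rw [rN_eq_rhoN hinj hsurj hlt hflat hi, rN_eq_rhoN hinj hsurj hlt hflat hj]
    have ha : rhoN e i < rhoN e t := rhoN_lt h1 h3
    have hb : rhoN e t ≤ rhoN e j := rhoN_mono h2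
    omega
  · push_neg at hex
    have hno : ∀ t, i < t → t ≤ j → ¬ WordRunStart e t := fun t h1 h2 => hex t h1 h2
    have hr : rN m (pNW e m) (e i) = rN m (pNW e m) (e j) := by
      rw [rN_eq_rhoN hinj hsurj hlt hflat hi, rN_eq_rhoN hinj hsurj hlt hflat hj]
      exact rhoN_eq_of_no_rs (by omega) hno
    have hval : e i < e j := by
      rcases inc_of_no_rs hinj (le_of_lt hij) hj hno with h | h
      · omega
      · exact h
    rw [KN, KN, hr]
    omega

end SecE

/-! ### Section G: a word sorted by the key of `p` is flattened with suffix-min `p` -/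

section SecG

variable {p : ℕ → ℕ}
variable (hpm : ∀ v < m, p v < m)
variable (hple : ∀ v < m, p v ≤ v)
variable (hpidem : ∀ v < m, p (p v) = p v)
variable (hpzero : ∀ v < m, p v = 0 → v = 0)
variable (hm : 0 < m)
variable (hinj : ∀ i < m, ∀ j < m, e i = e j → i = j)
variable (hsurj : ∀ v < m, ∃ i, i < m ∧ e i = v)
variable (hlt : ∀ i < m, e i < m)
variable (hsort : ∀ i j, i < j → j < m → KN m p (e i) < KN m p (e j))

include hsort hlt in
lemma g_rmono {i j : ℕ} (hij : i ≤ j) (hj : j < m) :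
    rN m p (e i) ≤ rN m p (e j) := by
  rcases Nat.eq_or_lt_of_le hij with h | h
  · exact le_of_eq (congrArg (rN m p ∘ e) h)
  · exact rN_le_of_KN_le (hlt j hj) (le_of_lt (hsort i j h hj))

include hsort in
lemma g_val_lt {i j : ℕ} (hij : i < j) (hj : j < m)
    (hr : rN m p (e i) = rN m p (e j)) : e i < e j :=
  lt_of_KN_lt_of_rN_eq (hsort i j hij hj) hr

include hple hpzero hpidem hm hsurj in
lemma g_occ {t : ℕ} (h1 : 1 ≤ t) (h2 : t ≤ #(SNp m p) + 1) :
    ∃ i, i < m ∧ rN m p (e i) = t := by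
  rcases Nat.eq_or_lt_of_le h1 with h | h
  · obtain ⟨i, him, hie⟩ := hsurj 0 hm
    exact ⟨i, him, by rw [hie, rN_zero hple hpzero hm, h]⟩
  · obtain ⟨c, hcS, hcrank⟩ := exists_rankN (m := m) (p := p) (t := t - 1) (by omega) (by omega)
    obtain ⟨i, him, hie⟩ := hsurj c (SNp_lt_m hcS)
    refine ⟨i, him, ?_⟩
    rw [hie, rN_SNp hpidem hcS, hcrank]
    omega

include hpm hple hpidem hpzero hm hsurj hlt hsort in
lemma g_jump {i : ℕ} (hi1 : i + 1 < m) (hjump : rN m p (e i) < rN m p (e (i + 1))) :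
    rN m p (e (i + 1)) = rN m p (e i) + 1 ∧ e (i + 1) ∈ SNp m p ∧
      rankN m p (e (i + 1)) = rN m p (e i) ∧ e (i + 1) < e i := by
  set t := rN m p (e i) with ht
  have him : i < m := by omega
  have ht1 : 1 ≤ t := rN_pos hpm hple (hlt i him)
  have hstep : rN m p (e (i + 1)) = t + 1 := by
    by_contra hcon
    have h2 : t + 2 ≤ rN m p (e (i + 1)) := by omega
    have h3 : rN m p (e (i + 1)) ≤ #(SNp m p) + 1 := rN_le
    obtain ⟨j, hjm, hjr⟩ := g_occ hple hpidem hpzero hm hsurj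
      (t := t + 1) (by omega) (by omega)
    rcases Nat.lt_or_ge j (i + 1) with hj | hj
    · have := g_rmono hlt hsort (show j ≤ i by omega) him
      omega
    · have := g_rmono hlt hsort hj hjm
      omega
  have hminval : ∀ w, w < m → rN m p w = t + 1 → e (i + 1) ≤ w := by
    intro w hwm hwr
    obtain ⟨j, hjm, hje⟩ := hsurj w hwm
    have hij : i + 1 ≤ j := by
      by_contra hcon
      have := g_rmono hlt hsort (show j ≤ i by omega) him
      rw [hje] at this
      omega
    have hKle : KN m p (e (i + 1)) ≤ KN m p (e j) := by
      rcases Nat.eq_or_lt_of_le hij with h | h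
      · exact le_of_eq (congrArg (KN m p ∘ e) h)
      · exact le_of_lt (hsort _ _ h hjm)
    rw [← hje]
    exact le_of_KN_le_of_rN_eq hKle (by rw [hstep, hje, hwr])
  obtain ⟨hmem, hrank, x, hxm, hpx, hxgt, hxr⟩ :=
    classMin_spec hpm hple hpidem (hlt (i + 1) hi1) ht1 hstep hminval
  refine ⟨hstep, hmem, hrank, ?_⟩
  obtain ⟨j, hjm, hje⟩ := hsurj x hxm
  have hji : j ≤ i := by
    by_contra hcon
    have := g_rmono hlt hsort (show i + 1 ≤ j by omega) hjm
    rw [hje, hxr] at this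
    omega
  have hKle : KN m p (e j) ≤ KN m p (e i) := by
    rcases Nat.eq_or_lt_of_le hji with h | h
    · exact le_of_eq (congrArg (KN m p ∘ e) h)
    · exact le_of_lt (hsort _ _ h him)
  have : x ≤ e i := by
    rw [← hje]
    exact le_of_KN_le_of_rN_eq hKle (by rw [hje, hxr])
  omega

include hpm hple hpzero hm hsurj hlt hsort in
lemma g_first : e 0 = 0 ∧ rN m p (e 0) = 1 := by
  obtain ⟨j, hjm, hje⟩ := hsurj 0 hm
  have hK : KN m p (e 0) ≤ KN m p 0 := by
    rcases Nat.eq_zero_or_pos j with h | h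
    · subst h
      rw [hje]
    · have h2 := hsort 0 j h hjm
      rw [hje] at h2
      exact le_of_lt h2
  rw [KN, KN, rN_zero hple hpzero hm] at hK
  have h1 : 1 ≤ rN m p (e 0) := rN_pos hpm hple (hlt 0 hm)
  have h2 : 1 * m ≤ rN m p (e 0) * m := Nat.mul_le_mul_right m h1
  have he0 : e 0 = 0 := by omega
  have hr0 : rN m p (e 0) = 1 := by
    rw [he0]
    exact rN_zero hple hpzero hm
  exact ⟨he0, hr0⟩

include hpm hple hpidem hpzero hm hsurj hlt hsort in
lemma g_rs_iff {j : ℕ} (hj0 : 0 < j) (hjm : j < m) :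
    WordRunStart e j ↔ rN m p (e (j - 1)) < rN m p (e j) := by
  constructor
  · intro hrs
    have hdesc : e j < e (j - 1) := by
      rcases hrs with h | h
      · omega
      · exact h
    have hle := g_rmono hlt hsort (show j - 1 ≤ j by omega) hjm
    rcases Nat.eq_or_lt_of_le hle with h | h
    · exfalso
      have := g_val_lt hsort (show j - 1 < j by omega) hjm h
      omega
    · exact h
  · intro hjump
    have hj1 : (j - 1) + 1 = j := by omega
    have := g_jump hpm hple hpidem hpzero hm hsurj hlt hsort
      (i := j - 1) (by omega) (by rw [hj1]; exact hjump)
    rw [hj1] at this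
    exact Or.inr this.2.2.2

include hpm hple hpidem hpzero hm hsurj hlt hsort in
lemma g_rs_val {j : ℕ} (hj0 : 0 < j) (hjm : j < m) (hrs : WordRunStart e j) :
    e j ∈ SNp m p ∧ rankN m p (e j) = rN m p (e (j - 1)) ∧
      rN m p (e j) = rN m p (e (j - 1)) + 1 := by
  have hjump := (g_rs_iff hpm hple hpidem hpzero hm hsurj hlt hsort hj0 hjm).1 hrs
  have hj1 : (j - 1) + 1 = j := by omega
  have := g_jump hpm hple hpidem hpzero hm hsurj hlt hsort
    (i := j - 1) (by omega) (by rw [hj1]; exact hjump)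
  rw [hj1] at this
  exact ⟨this.2.1, this.2.2.1, this.1⟩

include hpm hple hpidem hpzero hm hsurj hlt hsort in
lemma g_flat : WordFlattened e m := by
  intro i hi j hj hrsi hrsj hij
  have hj0 : 0 < j := by omega
  obtain ⟨hjS, hjrank, hjstep⟩ :=
    g_rs_val hpm hple hpidem hpzero hm hsurj hlt hsort hj0 hj hrsj
  rcases Nat.eq_zero_or_pos i with h0 | h0
  · have he0 := (g_first hpm hple hpzero hm hsurj hlt hsort).1
    have := SNp_ne_zero hpzero hjS
    rw [h0, he0]
    omega
  · obtain ⟨hiS, hirank, histep⟩ :=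
      g_rs_val hpm hple hpidem hpzero hm hsurj hlt hsort h0 hi hrsi
    have hmono : rN m p (e i) ≤ rN m p (e (j - 1)) :=
      g_rmono hlt hsort (show i ≤ j - 1 by omega) (by omega)
    have hranklt : rankN m p (e i) < rankN m p (e j) := by omega
    by_contra hcon
    push_neg at hcon
    have := rankN_mono (m := m) (p := p) hcon
    omega

include hpm hple hpidem hpzero hm hinj hsurj hlt hsort in
lemma g_rconst : ∀ {a b : ℕ}, a ≤ b → b < m →
    (∀ t, a < t → t ≤ b → ¬ WordRunStart e t) → rN m p (e a) = rN m p (e b) := by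
  intro a b
  induction b with
  | zero =>
    intro h _ _
    have ha : a = 0 := by omega
    rw [ha]
  | succ b ih =>
    intro hab hbm hno
    rcases Nat.eq_or_lt_of_le hab with h | h
    · rw [h]
    · have h1 : rN m p (e a) = rN m p (e b) :=
        ih (by omega) (by omega) (fun t ht1 ht2 => hno t ht1 (by omega))
      have h2 : rN m p (e b) = rN m p (e (b + 1)) := by
        have hle := g_rmono hlt hsort (show b ≤ b + 1 by omega) hbm
        rcases Nat.eq_or_lt_of_le hle with h' | h'
        · exact h'
        · exfalso
          apply hno (b + 1) (by omega) (le_refl _)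
          have hj1 : (b + 1) - 1 = b := by omega
          apply (g_rs_iff hpm hple hpidem hpzero hm hsurj hlt hsort
            (by omega) hbm).2
          rw [hj1]
          exact h'
      omega

include hpm hple hpidem hpzero hm hinj hsurj hlt hsort in
lemma g_pnw {v : ℕ} (hv : v < m) : pNW e m v = p v := by
  have hflat := g_flat hpm hple hpidem hpzero hm hsurj hlt hsort
  obtain ⟨hi, hei⟩ := posN_lt hsurj hv
  set i := posN e m v with hidef
  have hpnw : pNW e m v = sminN e m i := rfl
  rcases smin_cases hinj hflat hi with h | ⟨hns, hrs, hdesc, heq⟩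
  · -- suffix min is v itself; must show p v = v
    rw [hpnw, h, hei]
    by_contra hne
    have hne' : p v ≠ v := fun hh => hne hh.symm
    obtain ⟨hpvS, hpvlt⟩ := pv_mem_SNp hpm hple hv hne'
    have hKlt : KN m p v < KN m p (p v) := by
      rw [KN, KN, rN, if_neg hne', rN_SNp hpidem hpvS]
      have hE : (rankN m p (p v) + 1) * m = rankN m p (p v) * m + m := by ring
      omega
    obtain ⟨hj, hje⟩ := posN_lt hsurj (hpm v hv)
    set j := posN e m (p v) with hjdef
    have hij : i < j := by
      by_contra hcon
      push_neg at hcon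
      have : KN m p (e j) ≤ KN m p (e i) := by
        rcases Nat.eq_or_lt_of_le hcon with h' | h'
        · exact le_of_eq (congrArg (KN m p ∘ e) h')
        · exact le_of_lt (hsort _ _ h' hi)
      rw [hei, hje] at this
      omega
    have := sminN_le (e := e) hi (le_of_lt hij) hj
    rw [h, hei, hje] at this
    omega
  · -- suffix min is the next run start value
    set q := nsN e m i with hqdef
    have hq0 : 0 < q := by
      have := nsN_gt (e := e) hi
      omega
    obtain ⟨hqS, hqrank, hqstep⟩ :=
      g_rs_val hpm hple hpidem hpzero hm hsurj hlt hsort hq0 hns hrs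
    have hrconst : rN m p (e i) = rN m p (e (q - 1)) := by
      apply g_rconst hpm hple hpidem hpzero hm hinj hsurj hlt hsort
        (show i ≤ q - 1 by have := nsN_gt (e := e) hi; omega) (by omega)
      intro t ht1 ht2
      exact nsN_min hi ht1 (by omega)
    rcases Classical.em (p v = v) with hfix | hne
    · exfalso
      have hrv : rN m p v = rankN m p v + 1 := by rw [rN, if_pos hfix]
      have : rankN m p (e q) = rankN m p v + 1 := by
        rw [hqrank, ← hrconst, hei, hrv]
      have hvlt : v < e q := fixed_lt_next hqS this
      rw [hei] at hdesc
      omega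
    · have hrv : rN m p v = rankN m p (p v) := by rw [rN, if_neg hne]
      obtain ⟨hpvS, hpvlt⟩ := pv_mem_SNp hpm hple hv hne
      have : rankN m p (e q) = rankN m p (p v) := by
        rw [hqrank, ← hrconst, hei, hrv]
      have := rankN_inj hqS hpvS this
      rw [hpnw, heq]
      exact this

end SecG

/-! ### Section F: sorting a word by an injective key, at the permutation level -/

lemma entry_lt' {m : ℕ} (σ : Equiv.Perm (Fin m)) : ∀ i < m, entry σ i < m := by
  intro i hi
  rw [entry, dif_pos hi]
  exact (σ ⟨i, hi⟩).isLt

lemma entry_inj' {m : ℕ} (σ : Equiv.Perm (Fin m)) :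
    ∀ i < m, ∀ j < m, entry σ i = entry σ j → i = j := by
  intro i hi j hj h
  rw [entry, dif_pos hi, entry, dif_pos hj] at h
  have h2 : σ ⟨i, hi⟩ = σ ⟨j, hj⟩ := Fin.val_injective h
  simpa using congrArg Fin.val (σ.injective h2)

lemma entry_surj' {m : ℕ} (σ : Equiv.Perm (Fin m)) :
    ∀ v < m, ∃ i, i < m ∧ entry σ i = v := by
  intro v hv
  refine ⟨↑(σ.symm ⟨v, hv⟩), (σ.symm ⟨v, hv⟩).isLt, ?_⟩
  rw [entry, dif_pos (σ.symm ⟨v, hv⟩).isLt]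
  simp

lemma exists_sorted_perm {m : ℕ} (K : ℕ → ℕ)
    (hK : ∀ v < m, ∀ w < m, K v = K w → v = w) :
    ∃ τ : Equiv.Perm (Fin m), ∀ i j, i < j → j < m →
      K (entry τ i) < K (entry τ j) := by
  classical
  have hT : #((Finset.range m).image K) = m := by
    rw [card_image_of_injOn, card_range]
    intro a ha b hb hab
    exact hK a (mem_range.1 (mem_coe.1 ha)) b (mem_range.1 (mem_coe.1 hb)) hab
  set T := (Finset.range m).image K with hTdef
  have hex : ∀ i : Fin m, ∃ v, v < m ∧ K v = T.orderEmbOfFin hT i := by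
    intro i
    have h2 : T.orderEmbOfFin hT i ∈ (Finset.range m).image K :=
      T.orderEmbOfFin_mem hT i
    rw [mem_image] at h2
    obtain ⟨v, hv, hkv⟩ := h2
    exact ⟨v, mem_range.1 hv, hkv⟩
  set F : Fin m → Fin m := fun i => ⟨Nat.find (hex i), (Nat.find_spec (hex i)).1⟩
    with hFdef
  have hKF : ∀ i : Fin m, K ↑(F i) = T.orderEmbOfFin hT i := fun i =>
    (Nat.find_spec (hex i)).2
  have hFinj : Function.Injective F := by
    intro i j hij
    have : K ↑(F i) = K ↑(F j) := congrArg (K ∘ Fin.val) hij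
    rw [hKF i, hKF j] at this
    exact (T.orderEmbOfFin hT).strictMono.injective this
  refine ⟨Equiv.ofBijective F (Finite.injective_iff_bijective.1 hFinj), ?_⟩
  intro i j hij hj
  have hi : i < m := by omega
  rw [entry, dif_pos hi, entry, dif_pos hj]
  show K ↑(F ⟨i, hi⟩) < K ↑(F ⟨j, hj⟩)
  rw [hKF, hKF]
  exact (T.orderEmbOfFin hT).strictMono (by simp [Fin.lt_def]; omega)

lemma sorted_unique {m : ℕ} (K : ℕ → ℕ)
    (hK : ∀ v < m, ∀ w < m, K v = K w → v = w) (τ τ' : Equiv.Perm (Fin m))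
    (h1 : ∀ i j, i < j → j < m → K (entry τ i) < K (entry τ j))
    (h2 : ∀ i j, i < j → j < m → K (entry τ' i) < K (entry τ' j)) : τ = τ' := by
  classical
  have hT : #((Finset.range m).image K) = m := by
    rw [card_image_of_injOn, card_range]
    intro a ha b hb hab
    exact hK a (mem_range.1 (mem_coe.1 ha)) b (mem_range.1 (mem_coe.1 hb)) hab
  set T := (Finset.range m).image K with hTdef
  have key : ∀ (ρ : Equiv.Perm (Fin m)),
      (∀ i j, i < j → j < m → K (entry ρ i) < K (entry ρ j)) →
      (fun i : Fin m => K (entry ρ ↑i)) = ⇑(T.orderEmbOfFin hT) := by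
    intro ρ hρ
    apply orderEmbOfFin_unique hT
    · intro x
      show _ ∈ (Finset.range m).image K
      exact mem_image_of_mem K (mem_range.2 (entry_lt' ρ ↑x x.isLt))
    · intro i j hij
      exact hρ ↑i ↑j (Fin.lt_def.1 hij) j.isLt
  have hkey := (key τ h1).trans (key τ' h2).symm
  apply Equiv.ext
  intro x
  have hx : K (entry τ ↑x) = K (entry τ' ↑x) := congrFun hkey x
  have := hK (entry τ ↑x) (entry_lt' τ ↑x x.isLt) (entry τ' ↑x) (entry_lt' τ' ↑x x.isLt) hx
  rw [entry, dif_pos x.isLt, entry, dif_pos x.isLt] at this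
  have h3 : τ ⟨↑x, x.isLt⟩ = τ' ⟨↑x, x.isLt⟩ := Fin.val_injective this
  simpa using h3

/-! ### Section H: flattened permutations are equivalent to idempotent decreasing maps -/

/-- Idempotent, decreasing, zero-reflecting self-maps of `Fin (n+1)`. -/
def MidS (n : ℕ) := {p : Fin (n + 1) → Fin (n + 1) //
  (∀ v, p (p v) = p v) ∧ (∀ v, p v ≤ v) ∧ (∀ v, p v = 0 → v = 0)}

/-- The map sending a flattened permutation to its suffix-minimum function. -/
def flatToMid (n : ℕ) (σ : {σ : Equiv.Perm (Fin (n + 1)) // IsFlattened σ}) : MidS n := by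
  refine ⟨fun v => ⟨pNW (entry σ.1) (n + 1) ↑v,
    pNW_lt (entry_surj' σ.1) (entry_lt' σ.1) v.isLt⟩, ?_, ?_, ?_⟩
  · intro v
    apply Fin.ext
    show pNW (entry σ.1) (n + 1) _ = _
    exact pNW_idem (entry_inj' σ.1) (entry_surj' σ.1) v.isLt
  · intro v
    rw [Fin.le_def]
    exact pNW_le (entry_surj' σ.1) v.isLt
  · intro v hv
    have h1 : pNW (entry σ.1) (n + 1) ↑v = 0 := by
      have := congrArg Fin.val hv
      simpa using this
    apply Fin.ext
    simp only [Fin.val_zero]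
    exact pNW_zero (entry_inj' σ.1) (entry_surj' σ.1) σ.2 (Nat.succ_pos n) v.isLt h1

lemma flatToMid_injective (n : ℕ) : Function.Injective (flatToMid n) := by
  intro σ τ h
  have hag : pNW (entry σ.1) (n + 1) = pNW (entry τ.1) (n + 1) := by
    funext v
    rcases Nat.lt_or_ge v (n + 1) with hv | hv
    · have h2 := congrFun (congrArg Subtype.val h) ⟨v, hv⟩
      have h3 := congrArg Fin.val h2
      simpa [flatToMid] using h3
    · rw [pNW_out (entry_lt' σ.1) hv, pNW_out (entry_lt' τ.1) hv]
  apply Subtype.ext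
  apply sorted_unique (KN (n + 1) (pNW (entry σ.1) (n + 1)))
    (fun v hv w hw => KN_inj hv hw)
  · intro i j hij hj
    exact claim1 (entry_inj' σ.1) (entry_surj' σ.1) (entry_lt' σ.1) σ.2 hij hj
  · intro i j hij hj
    rw [hag]
    exact claim1 (entry_inj' τ.1) (entry_surj' τ.1) (entry_lt' τ.1) τ.2 hij hj

lemma flatToMid_surjective (n : ℕ) : Function.Surjective (flatToMid n) := by
  intro P
  set pn : ℕ → ℕ := fun v => if h : v < n + 1 then (↑(P.1 ⟨v, h⟩) : ℕ) else 0 with hpn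
  have hpm : ∀ v < n + 1, pn v < n + 1 := by
    intro v hv
    simp only [hpn, dif_pos hv]
    exact (P.1 ⟨v, hv⟩).isLt
  have hple : ∀ v < n + 1, pn v ≤ v := by
    intro v hv
    simp only [hpn, dif_pos hv]
    exact Fin.le_def.1 (P.2.2.1 ⟨v, hv⟩)
  have hpidem : ∀ v < n + 1, pn (pn v) = pn v := by
    intro v hv
    have h1 : pn v = ↑(P.1 ⟨v, hv⟩) := dif_pos hv
    have h2 : pn (↑(P.1 ⟨v, hv⟩) : ℕ) = ↑(P.1 ⟨↑(P.1 ⟨v, hv⟩), (P.1 ⟨v, hv⟩).isLt⟩) :=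
      dif_pos (P.1 ⟨v, hv⟩).isLt
    rw [h1, h2]
    congr 1
    rw [Fin.eta]
    exact P.2.1 ⟨v, hv⟩
  have hpzero : ∀ v < n + 1, pn v = 0 → v = 0 := by
    intro v hv h
    simp only [hpn, dif_pos hv] at h
    have h2 : P.1 ⟨v, hv⟩ = 0 := Fin.ext (by simpa using h)
    have := P.2.2.2 ⟨v, hv⟩ h2
    simpa using congrArg Fin.val this
  obtain ⟨τ, hsort⟩ := exists_sorted_perm (m := n + 1) (KN (n + 1) pn)
    (fun v hv w hw => KN_inj hv hw)
  have hflatτ : IsFlattened τ :=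
    g_flat hpm hple hpidem hpzero (Nat.succ_pos n) (entry_surj' τ) (entry_lt' τ) hsort
  refine ⟨⟨τ, hflatτ⟩, ?_⟩
  apply Subtype.ext
  funext v
  apply Fin.ext
  show pNW (entry τ) (n + 1) ↑v = ↑(P.1 v)
  have hg := g_pnw hpm hple hpidem hpzero (Nat.succ_pos n) (entry_inj' τ)
    (entry_surj' τ) (entry_lt' τ) hsort v.isLt
  rw [hg]
  simp [hpn, dif_pos v.isLt]
  intro h
  have := v.isLt
  omega

/-- Flattened permutations of `[n+1]` are equivalent to idempotent decreasing
zero-reflecting self-maps of `Fin (n+1)`. -/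
noncomputable def flatEquivMid (n : ℕ) :
    {σ : Equiv.Perm (Fin (n + 1)) // IsFlattened σ} ≃ MidS n :=
  Equiv.ofBijective (flatToMid n) ⟨flatToMid_injective n, flatToMid_surjective n⟩

/-! ### Section I: idempotent decreasing maps are equivalent to finpartitions -/

/-- Idempotent decreasing self-maps of `Fin n`. -/
def Mid0 (n : ℕ) := {p : Fin n → Fin n // (∀ v, p (p v) = p v) ∧ (∀ v, p v ≤ v)}

/-- Removing the (fixed) zero point. -/
def midEquivMid0 (n : ℕ) : MidS n ≃ Mid0 n where
  toFun P := by
    refine ⟨fun v => (P.1 v.succ).pred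
      (fun h => Fin.succ_ne_zero v (P.2.2.2 v.succ h)), ?_, ?_⟩
    · intro v
      apply Fin.ext
      simp only [Fin.coe_pred, Fin.succ_pred]
      rw [P.2.1 v.succ]
    · intro v
      rw [Fin.le_def]
      simp only [Fin.coe_pred]
      have h1 := Fin.le_def.1 (P.2.2.1 v.succ)
      rw [Fin.val_succ] at h1
      omega
  invFun Q := by
    refine ⟨fun v => Fin.cases 0 (fun w => (Q.1 w).succ) v, ?_, ?_, ?_⟩
    · intro v
      induction v using Fin.cases with
      | zero => simp
      | succ w => simp [Q.2.1 w]
    · intro v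
      induction v using Fin.cases with
      | zero => simp
      | succ w => simp [Fin.succ_le_succ_iff, Q.2.2 w]
    · intro v
      induction v using Fin.cases with
      | zero => intro; rfl
      | succ w => intro h; exact absurd h (Fin.succ_ne_zero _)
  left_inv P := by
    apply Subtype.ext
    funext v
    induction v using Fin.cases with
    | zero =>
      simp only [Fin.cases_zero]
      exact (Fin.le_zero_iff.1 (P.2.2.1 0)).symm
    | succ w =>
      simp only [Fin.cases_succ, Fin.succ_pred]
  right_inv Q := by
    apply Subtype.ext
    funext v
    simp only [Fin.cases_succ, Fin.pred_succ]

lemma min'_congr' {α : Type*} [LinearOrder α] {s t : Finset α} (h : s = t)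
    (hs : s.Nonempty) : s.min' hs = t.min' (h ▸ hs) := by subst h; rfl

/-- The partition into fibers of an idempotent decreasing map. -/
def midToPart {n : ℕ} (P : Mid0 n) : Finpartition (Finset.univ : Finset (Fin n)) :=
  @Finpartition.ofSetoid (Fin n) _ _ (Setoid.ker P.1)
    (fun a b => decidable_of_iff (P.1 a = P.1 b) Iff.rfl)

/-- The map sending each point to the minimum of its block. -/
def partToMid {n : ℕ} (Q : Finpartition (Finset.univ : Finset (Fin n))) : Mid0 n := by
  refine ⟨fun v => (Q.part v).min' ⟨v, Q.mem_part (mem_univ v)⟩, ?_, ?_⟩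
  · intro v
    have ha : (Q.part v).min' ⟨v, Q.mem_part (mem_univ v)⟩ ∈ Q.part v := min'_mem _ _
    have hpa : Q.part ((Q.part v).min' ⟨v, Q.mem_part (mem_univ v)⟩) = Q.part v :=
      Q.part_eq_of_mem (Q.part_mem.2 (mem_univ v)) ha
    apply le_antisymm
    · exact min'_le _ _ (Q.mem_part (mem_univ _))
    · apply le_min'
      intro b hb
      rw [hpa] at hb
      exact min'_le _ _ hb
  · intro v
    exact min'_le _ _ (Q.mem_part (mem_univ v))

lemma finpartition_ext_part {α : Type*} [DecidableEq α] [Fintype α]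
    (P Q : Finpartition (Finset.univ : Finset α)) (h : ∀ a, P.part a = Q.part a) :
    P = Q := by
  have hparts : P.parts = Q.parts := by
    ext t
    constructor
    · intro ht
      obtain ⟨a, hat⟩ := P.nonempty_of_mem_parts ht
      rw [← P.part_eq_of_mem ht hat, h a]
      exact Q.part_mem.2 (mem_univ a)
    · intro ht
      obtain ⟨a, hat⟩ := Q.nonempty_of_mem_parts ht
      rw [← Q.part_eq_of_mem ht hat, ← h a]
      exact P.part_mem.2 (mem_univ a)
  exact Finpartition.ext hparts

lemma mem_part_midToPart {n : ℕ} (P : Mid0 n) (a b : Fin n) :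
    b ∈ (midToPart P).part a ↔ P.1 a = P.1 b := by
  exact @Finpartition.mem_part_ofSetoid_iff_rel (Fin n) _ a _ (Setoid.ker P.1)
    (fun a b => decidable_of_iff (P.1 a = P.1 b) Iff.rfl) b

/-- Idempotent decreasing maps on `Fin n` are equivalent to partitions of `Fin n`. -/
def mid0EquivPart (n : ℕ) : Mid0 n ≃ Finpartition (Finset.univ : Finset (Fin n)) where
  toFun := midToPart
  invFun := partToMid
  left_inv P := by
    apply Subtype.ext
    funext v
    have h1 : (P.1 v) ∈ (midToPart P).part v :=
      (mem_part_midToPart P v (P.1 v)).2 (P.2.1 v).symm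
    show ((midToPart P).part v).min' ⟨v, (midToPart P).mem_part (mem_univ v)⟩ = P.1 v
    apply le_antisymm (min'_le _ _ h1)
    apply le_min'
    intro b hb
    exact le_trans (le_of_eq ((mem_part_midToPart P v b).1 hb)) (P.2.2 b)
  right_inv Q := by
    apply finpartition_ext_part
    intro a
    ext b
    rw [mem_part_midToPart]
    show (partToMid Q).1 a = (partToMid Q).1 b ↔ _
    constructor
    · intro h
      have h1 : Q.part ((partToMid Q).1 a) = Q.part a :=
        Q.part_eq_of_mem (Q.part_mem.2 (mem_univ a))
          (min'_mem (Q.part a) ⟨a, Q.mem_part (mem_univ a)⟩)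
      have h2 : Q.part ((partToMid Q).1 b) = Q.part b :=
        Q.part_eq_of_mem (Q.part_mem.2 (mem_univ b))
          (min'_mem (Q.part b) ⟨b, Q.mem_part (mem_univ b)⟩)
      rw [h] at h1
      rw [h2] at h1
      rw [← h1]
      exact Q.mem_part (mem_univ b)
    · intro hb
      have hpb : Q.part b = Q.part a :=
        Q.part_eq_of_mem (Q.part_mem.2 (mem_univ a)) hb
      exact min'_congr' hpb.symm ⟨a, Q.mem_part (mem_univ a)⟩

end FlatAux


/-- For every integer `n ≥ 1`, there is a bijection between the set of flattened partitions
over `[n+1]` and the set of set partitions of `[n]` (partitions of `Fin n` into disjoint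
nonempty blocks); in particular the two sets have the same cardinality. -/
theorem flattened_equiv_partitions (n : ℕ) (hn : 1 ≤ n) :
    Nonempty ({σ : Equiv.Perm (Fin (n + 1)) // IsFlattened σ} ≃
      Finpartition (Finset.univ : Finset (Fin n))) :=
  ⟨(FlatAux.flatEquivMid n).trans
    ((FlatAux.midEquivMid0 n).trans (FlatAux.mid0EquivPart n))⟩
end

section
/- For all integers n ≥ 1 and k ≥ 1, the number of set partitions of [n] having exactly k−1 blocks of size greater than 1 equals f_{n+1, k}, the number of flattened partitions over [n+1] having exactly k runs. -/
open Finset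

namespace FlatAux

variable {m k : ℕ}

/-- run-index data. -/
def CondA (g : Fin m → Fin k) : Prop := ∀ i : Fin k, ∃ v, g v = i

def CondB (g : Fin m → Fin k) : Prop :=
  ∀ v w : Fin m, g v < g w → ∃ u : Fin m, g u = g v ∧ u < w

def CondC (g : Fin m → Fin k) : Prop :=
  ∀ v : Fin m, 0 < (g v : ℕ) → (∀ u, g u = g v → v ≤ u) →
    ∃ w, (g w : ℕ) + 1 = (g v : ℕ) ∧ v < w

def OK (g : Fin m → Fin k) : Prop := CondA g ∧ CondB g ∧ CondC g

instance (g : Fin m → Fin k) : Decidable (OK g) := by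
  unfold OK CondA CondB CondC; infer_instance

def G (m k : ℕ) : Finset (Fin m → Fin k) := Finset.univ.filter OK

/-- key for sorting: class index first, value second. -/
def keyf (g : Fin m → Fin k) (v : Fin m) : ℕ := (g v : ℕ) * m + (v : ℕ)

lemma keyf_mod (g : Fin m → Fin k) (v : Fin m) : keyf g v % m = (v : ℕ) := by
  rw [keyf, Nat.mul_comm, Nat.mul_add_mod, Nat.mod_eq_of_lt v.isLt]

lemma keyf_div (g : Fin m → Fin k) (v : Fin m) : keyf g v / m = (g v : ℕ) := by
  have hm : 0 < m := v.pos
  rw [keyf, Nat.mul_comm, Nat.mul_add_div hm, Nat.div_eq_of_lt v.isLt, Nat.add_zero]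

lemma keyf_inj (g : Fin m → Fin k) : Function.Injective (keyf g) := by
  intro v w h
  have := congrArg (· % m) h
  simpa [keyf_mod, Fin.ext_iff] using this

def keyset (g : Fin m → Fin k) : Finset ℕ := Finset.univ.image (keyf g)

lemma keyset_card (g : Fin m → Fin k) : (keyset g).card = m := by
  rw [keyset, Finset.card_image_of_injective _ (keyf_inj g)]
  simp

/-- enumeration of the keys in increasing order -/
noncomputable def oi (g : Fin m → Fin k) : Fin m ≃o (keyset g : Finset ℕ) :=
  (keyset g).orderIsoOfFin (keyset_card g)

noncomputable def word (g : Fin m → Fin k) (p : Fin m) : Fin m :=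
  ⟨((oi g p : ℕ)) % m, Nat.mod_lt _ p.pos⟩

lemma oi_eq_key (g : Fin m → Fin k) (p : Fin m) :
    (oi g p : ℕ) = keyf g (word g p) := by
  have h : (oi g p : ℕ) ∈ keyset g := (oi g p).2
  obtain ⟨v, -, hv⟩ := Finset.mem_image.mp h
  have hw : word g p = v := by
    apply Fin.ext
    show (oi g p : ℕ) % m = (v : ℕ)
    rw [← hv, keyf_mod]
  rw [hw, hv]

lemma word_class (g : Fin m → Fin k) (p : Fin m) :
    (g (word g p) : ℕ) = (oi g p : ℕ) / m := by
  rw [oi_eq_key, keyf_div]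

lemma oi_strictMono (g : Fin m → Fin k) :
    StrictMono (fun p => ((oi g p : ℕ))) := by
  intro p q h
  exact_mod_cast (oi g).strictMono h

lemma word_inj (g : Fin m → Fin k) : Function.Injective (word g) := by
  intro p q h
  have : (oi g p : ℕ) = (oi g q : ℕ) := by
    rw [oi_eq_key, oi_eq_key, h]
  exact (oi g).injective (Subtype.ext this)

noncomputable def perm (g : Fin m → Fin k) : Equiv.Perm (Fin m) :=
  Equiv.ofBijective (word g) (Finite.injective_iff_bijective.mp (word_inj g))

lemma perm_apply (g : Fin m → Fin k) (p : Fin m) : perm g p = word g p := rfl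

lemma entry_perm (g : Fin m → Fin k) {p : ℕ} (h : p < m) :
    entry (perm g) p = (word g ⟨p, h⟩ : ℕ) := by
  simp [entry, h, perm_apply]


/-- class index along positions, as a natural number -/
noncomputable def Q (g : Fin m → Fin k) (p : Fin m) : ℕ := (g (word g p) : ℕ)

lemma Q_mono (g : Fin m → Fin k) : Monotone (Q g) := by
  intro p q h
  rw [Q, Q, word_class, word_class]
  exact Nat.div_le_div_right ((oi g).monotone h)

lemma word_lt_same (g : Fin m → Fin k) {p q : Fin m} (h : p < q)
    (he : Q g p = Q g q) : word g p < word g q := by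
  have hk : keyf g (word g p) < keyf g (word g q) := by
    rw [← oi_eq_key, ← oi_eq_key]
    exact oi_strictMono g h
  rw [Q, Q] at he
  rw [keyf, keyf, he] at hk
  rw [Fin.lt_iff_val_lt_val]
  omega

/-- every value is some word -/
lemma exists_pos (g : Fin m → Fin k) (v : Fin m) : ∃ p, word g p = v :=
  ⟨(perm g).symm v, (perm g).apply_symm_apply v⟩

lemma min_class_word (g : Fin m → Fin k) (p : Fin m)
    (h : ∀ q : Fin m, q < p → Q g q ≠ Q g p) :
    ∀ v, (g v : ℕ) = Q g p → word g p ≤ v := by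
  intro v hv
  obtain ⟨q, rfl⟩ := exists_pos g v
  rcases lt_trichotomy q p with hlt | rfl | hgt
  · exact absurd (show Q g q = Q g p from hv) (h q hlt)
  · exact le_refl _
  · exact (word_lt_same g hgt (show Q g p = Q g q by rw [show Q g q = Q g p from hv])).le

lemma max_class_word (g : Fin m → Fin k) (p : Fin m)
    (h : ∀ q : Fin m, p < q → Q g q ≠ Q g p) :
    ∀ v, (g v : ℕ) = Q g p → v ≤ word g p := by
  intro v hv
  obtain ⟨q, rfl⟩ := exists_pos g v
  rcases lt_trichotomy q p with hlt | rfl | hgt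
  · exact (word_lt_same g hlt (show Q g q = Q g p from hv)).le
  · exact le_refl _
  · exact absurd (show Q g q = Q g p from hv) (h q hgt)

lemma no_skip (g : Fin m → Fin k) (hA : CondA g) {p q : Fin m}
    (h : (p : ℕ) + 1 = (q : ℕ)) : Q g q ≤ Q g p + 1 := by
  by_contra hc
  push_neg at hc
  have hlt : Q g p + 1 < k := lt_of_lt_of_le hc (Nat.le_of_lt_succ (Nat.lt_succ_of_lt (g (word g q)).isLt)) |>.trans_le (le_refl _)
  obtain ⟨v, hv⟩ := hA ⟨Q g p + 1, by
    have : Q g q < k := (g (word g q)).isLt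
    omega⟩
  obtain ⟨r, rfl⟩ := exists_pos g v
  have hr : Q g r = Q g p + 1 := by rw [Q, hv]
  rcases le_or_gt r p with hle | hgt
  · have := Q_mono g hle
    omega
  · have hq : q ≤ r := by
      rw [Fin.le_iff_val_le_val]
      rw [Fin.lt_iff_val_lt_val] at hgt
      omega
    have := Q_mono g hq
    omega


lemma Q_lt_k (g : Fin m → Fin k) (p : Fin m) : Q g p < k := (g (word g p)).isLt

lemma Q_zero (g : Fin m → Fin k) (hA : CondA g) (h0 : Fin m) : Q g h0 = 0 ∨ 0 < Q g h0 := by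
  omega

lemma Q_at_zero (g : Fin m → Fin k) (hA : CondA g) (hm : 0 < m) :
    Q g ⟨0, hm⟩ = 0 := by
  have hk : 0 < k := (g ⟨0, hm⟩).pos
  obtain ⟨v, hv⟩ := hA ⟨0, hk⟩
  obtain ⟨r, rfl⟩ := exists_pos g v
  have h1 : Q g ⟨0, hm⟩ ≤ Q g r := Q_mono g (by exact Fin.mk_le_of_le_val (Nat.zero_le _))
  have h2 : Q g r = 0 := by rw [Q, hv]
  omega

lemma runstart_succ_iff (g : Fin m → Fin k) (hg : OK g) {p q : Fin m}
    (h : (p : ℕ) + 1 = (q : ℕ)) :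
    WordRunStart (entry (perm g)) (q : ℕ) ↔ Q g q = Q g p + 1 := by
  obtain ⟨hA, hB, hC⟩ := hg
  have hpq : p < q := by rw [Fin.lt_iff_val_lt_val]; omega
  have e1 : entry (perm g) (q : ℕ) = (word g q : ℕ) := by
    rw [entry_perm g q.isLt]
  have e2 : entry (perm g) ((q : ℕ) - 1) = (word g p : ℕ) := by
    rw [entry_perm g (show (q:ℕ) - 1 < m by omega)]
    congr 1
    apply congrArg
    apply Fin.ext
    simp only []
    omega
  constructor
  · rintro (h0 | hlt)
    · omega
    · rw [e1, e2] at hlt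
      have hne : Q g p ≠ Q g q := by
        intro he
        have := word_lt_same g hpq he
        rw [Fin.lt_iff_val_lt_val] at this
        omega
      have hle : Q g p ≤ Q g q := Q_mono g hpq.le
      have := no_skip g hA h
      omega
  · intro hQ
    have hminq : ∀ v, (g v : ℕ) = Q g q → word g q ≤ v := by
      apply min_class_word
      intro r hr
      have : r ≤ p := by
        rw [Fin.le_iff_val_le_val]
        rw [Fin.lt_iff_val_lt_val] at hr
        omega
      have := Q_mono g this
      omega
    have hmaxp : ∀ v, (g v : ℕ) = Q g p → v ≤ word g p := by
      apply max_class_word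
      intro r hr
      have : q ≤ r := by
        rw [Fin.le_iff_val_le_val]
        rw [Fin.lt_iff_val_lt_val] at hr
        omega
      have := Q_mono g this
      omega
    obtain ⟨w, hw1, hw2⟩ := hC (word g q) (by rw [show (g (word g q) : ℕ) = Q g q from rfl]; omega)
      (fun u hu => hminq u (by rw [hu]; rfl))
    have hwp : w ≤ word g p := hmaxp w (by rw [show (g (word g q) : ℕ) = Q g q from rfl] at hw1; omega)
    right
    rw [e1, e2]
    rw [Fin.lt_iff_val_lt_val] at hw2
    rw [Fin.le_iff_val_le_val] at hwp
    omega

lemma not_runstart_succ (g : Fin m → Fin k) (hg : OK g) {p q : Fin m}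
    (h : (p : ℕ) + 1 = (q : ℕ)) (hn : ¬ WordRunStart (entry (perm g)) (q : ℕ)) :
    Q g q = Q g p := by
  have h1 := (runstart_succ_iff g hg h).not.mp hn
  have h2 := Q_mono g (show p ≤ q by rw [Fin.le_iff_val_le_val]; omega)
  have h3 := no_skip g hg.1 h
  omega

lemma count_runstarts (g : Fin m → Fin k) (hg : OK g) :
    ∀ p : ℕ, (hp : p < m) →
      ((Finset.range (p+1)).filter (WordRunStart (entry (perm g)))).card
        = Q g ⟨p, hp⟩ + 1 := by
  intro p
  induction p with
  | zero =>
    intro hp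
    rw [Q_at_zero g hg.1 hp]
    rw [show Finset.range 1 = {0} by rfl]
    rw [Finset.filter_singleton]
    simp [WordRunStart]
  | succ p ih =>
    intro hp
    have hp' : p < m := by omega
    have hq : ((⟨p, hp'⟩ : Fin m) : ℕ) + 1 = ((⟨p+1, hp⟩ : Fin m) : ℕ) := rfl
    rw [Finset.range_add_one, Finset.filter_insert]
    by_cases hrs : WordRunStart (entry (perm g)) (p+1)
    · rw [if_pos hrs, Finset.card_insert_of_notMem (by simp), ih hp']
      have := (runstart_succ_iff g hg hq).mp hrs
      omega
    · rw [if_neg hrs, ih hp']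
      have := not_runstart_succ g hg hq hrs
      omega

lemma runCount_perm (g : Fin m → Fin k) (hg : OK g) (hm : 0 < m) :
    runCount (perm g) = k := by
  have hk : 0 < k := (g ⟨0, hm⟩).pos
  have hm1 : m - 1 < m := by omega
  have h := count_runstarts g hg (m-1) hm1
  rw [show (m-1)+1 = m by omega] at h
  rw [runCount, wordRuns, h]
  have hub : Q g ⟨m-1, hm1⟩ < k := Q_lt_k g _
  have hlb : k - 1 ≤ Q g ⟨m-1, hm1⟩ := by
    obtain ⟨v, hv⟩ := hg.1 ⟨k-1, by omega⟩
    obtain ⟨r, rfl⟩ := exists_pos g v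
    have h1 : Q g r ≤ Q g ⟨m-1, hm1⟩ := Q_mono g (by
      rw [Fin.le_iff_val_le_val]
      show (r : ℕ) ≤ m - 1
      have := r.isLt
      omega)
    have h2 : Q g r = k - 1 := by rw [Q, hv]
    omega
  omega

lemma min_at_runstart (g : Fin m → Fin k) (hg : OK g) {i : ℕ} (hi : i < m)
    (hrs : WordRunStart (entry (perm g)) i) :
    ∀ r : Fin m, r < ⟨i, hi⟩ → Q g r < Q g ⟨i, hi⟩ := by
  intro r hr
  rw [Fin.lt_iff_val_lt_val] at hr
  have hr' : (r : ℕ) < i := hr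
  by_cases hi0 : i = 0
  · exfalso; subst hi0; simp at hr
  · have hi1 : i - 1 < m := by omega
    have heq : ((⟨i-1, hi1⟩ : Fin m) : ℕ) + 1 = ((⟨i, hi⟩ : Fin m) : ℕ) := by
      show i - 1 + 1 = i; omega
    have hQ := (runstart_succ_iff g hg heq).mp (by
      show WordRunStart (entry (perm g)) i
      exact hrs)
    have hrle : r ≤ (⟨i-1, hi1⟩ : Fin m) := by
      rw [Fin.le_iff_val_le_val]
      show (r : ℕ) ≤ i - 1
      omega
    have := Q_mono g hrle
    omega

lemma flattened_perm (g : Fin m → Fin k) (hg : OK g) : IsFlattened (perm g) := by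
  intro i hi j hj hri hrj hij
  have hminj := min_at_runstart g hg hj hrj
  have hmini := min_at_runstart g hg hi hri
  set pi : Fin m := ⟨i, hi⟩
  set pj : Fin m := ⟨j, hj⟩
  have hpij : pi < pj := by rw [Fin.lt_iff_val_lt_val]; exact hij
  have hQlt : Q g pi < Q g pj := hminj pi hpij
  obtain ⟨u, hu1, hu2⟩ := hg.2.1 (word g pi) (word g pj)
    (by rw [Fin.lt_iff_val_lt_val]; exact hQlt)
  have hle : word g pi ≤ u := by
    apply min_class_word g pi (fun r hr => (hmini r hr).ne)
    rw [hu1]; rfl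
  rw [entry_perm g hi, entry_perm g hj]
  have : word g pi < word g pj := lt_of_le_of_lt hle hu2
  exact this

lemma perm_mem_flatSet (g : Fin m → Fin k) (hg : OK g) (hm : 0 < m) :
    perm g ∈ flatSet m k := by
  rw [flatSet, Finset.mem_filter]
  exact ⟨Finset.mem_univ _, flattened_perm g hg, runCount_perm g hg hm⟩


/-! ### from flattened permutations to run data -/

def cnt (σ : Equiv.Perm (Fin m)) (p : ℕ) : ℕ :=
  ((Finset.range (p+1)).filter (WordRunStart (entry σ))).card

lemma cnt_pos (σ : Equiv.Perm (Fin m)) (p : ℕ) : 0 < cnt σ p := by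
  rw [cnt, Finset.card_pos]
  exact ⟨0, Finset.mem_filter.mpr ⟨Finset.mem_range.mpr (by omega), Or.inl rfl⟩⟩

lemma cnt_mono (σ : Equiv.Perm (Fin m)) {p q : ℕ} (h : p ≤ q) : cnt σ p ≤ cnt σ q :=
  Finset.card_le_card (Finset.filter_subset_filter _ (Finset.range_subset_range.mpr (by omega)))

lemma cnt_succ (σ : Equiv.Perm (Fin m)) (p : ℕ) :
    cnt σ (p+1) = if WordRunStart (entry σ) (p+1) then cnt σ p + 1 else cnt σ p := by
  rw [cnt, Finset.range_add_one, Finset.filter_insert]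
  split
  · rw [Finset.card_insert_of_notMem (by simp)]; rfl
  · rfl

lemma cnt_zero (σ : Equiv.Perm (Fin m)) : cnt σ 0 = 1 := by
  rw [cnt]
  rw [show Finset.range 1 = {0} by rfl, Finset.filter_singleton,
    if_pos (show WordRunStart (entry σ) 0 from Or.inl rfl)]
  rfl

lemma cnt_total (σ : Equiv.Perm (Fin m)) (hm : 0 < m) : cnt σ (m-1) = runCount σ := by
  rw [cnt, runCount, wordRuns, show m - 1 + 1 = m by omega]

lemma cnt_ivl (σ : Equiv.Perm (Fin m)) :
    ∀ q c, 1 ≤ c → c ≤ cnt σ q → ∃ p, p ≤ q ∧ cnt σ p = c := by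
  intro q
  induction q with
  | zero => intro c h1 h2; have := cnt_zero σ; exact ⟨0, le_refl _, by omega⟩
  | succ q ih =>
    intro c h1 h2
    rcases le_or_gt c (cnt σ q) with h | h
    · obtain ⟨p, hp1, hp2⟩ := ih c h1 h
      exact ⟨p, by omega, hp2⟩
    · refine ⟨q+1, le_refl _, ?_⟩
      have := cnt_succ σ q
      split at this <;> omega

lemma entry_ne (σ : Equiv.Perm (Fin m)) {p q : ℕ} (hp : p < m) (hq : q < m) (hne : p ≠ q) :
    entry σ p ≠ entry σ q := by
  rw [entry, dif_pos hp, entry, dif_pos hq]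
  intro h
  have : σ ⟨p, hp⟩ = σ ⟨q, hq⟩ := Fin.ext h
  have := σ.injective this
  rw [Fin.mk.injEq] at this
  exact hne this

lemma entry_lt_of_not_runstart (σ : Equiv.Perm (Fin m)) {p : ℕ} (hp : p + 1 < m)
    (hn : ¬ WordRunStart (entry σ) (p+1)) : entry σ p < entry σ (p+1) := by
  rw [WordRunStart, not_or, not_lt] at hn
  have hle : entry σ p ≤ entry σ (p+1) := by
    have := hn.2
    simpa using this
  have hne : entry σ p ≠ entry σ (p+1) := entry_ne σ (by omega) hp (by omega)
  omega

lemma entry_lt_of_cnt_eq (σ : Equiv.Perm (Fin m)) :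
    ∀ q p, q < m → p < q → cnt σ p = cnt σ q → entry σ p < entry σ q := by
  intro q
  induction q with
  | zero => omega
  | succ q ih =>
    intro p hq hpq hc
    have h1 : cnt σ p ≤ cnt σ q := cnt_mono σ (by omega)
    have h2 : cnt σ q ≤ cnt σ (q+1) := cnt_mono σ (by omega)
    have hnr : ¬ WordRunStart (entry σ) (q+1) := by
      intro hr
      have := cnt_succ σ q
      rw [if_pos hr] at this
      omega
    have hlast : entry σ q < entry σ (q+1) := entry_lt_of_not_runstart σ hq hnr
    rcases Nat.lt_or_ge p q with h | h
    · have hcnt : cnt σ p = cnt σ q := by omega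
      exact lt_trans (ih p (by omega) h hcnt) hlast
    · have : p = q := by omega
      subst this
      exact hlast

/-- leaders : first positions of each run, with minimality properties. -/
lemma leader_spec (σ : Equiv.Perm (Fin m)) (hm : 0 < m) {c : ℕ}
    (h1 : 1 ≤ c) (h2 : c ≤ runCount σ) :
    ∃ s, s < m ∧ cnt σ s = c ∧ WordRunStart (entry σ) s ∧
      (∀ r, r < s → cnt σ r < c) ∧
      (∀ p, p < m → cnt σ p = c → entry σ s ≤ entry σ p) := by
  obtain ⟨p0, hp0, hp0c⟩ := cnt_ivl σ (m-1) c h1 (by rw [cnt_total σ hm]; exact h2)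
  have hex : ∃ p, cnt σ p = c := ⟨p0, hp0c⟩
  set s := Nat.find hex with hs
  have hsc : cnt σ s = c := Nat.find_spec hex
  have hsle : s ≤ p0 := Nat.find_min' hex hp0c
  have hsm : s < m := by omega
  have hmin : ∀ r, r < s → cnt σ r < c := by
    intro r hr
    have h3 := Nat.find_min hex hr
    have h4 : cnt σ r ≤ cnt σ s := cnt_mono σ (by omega)
    omega
  have hrs : WordRunStart (entry σ) s := by
    rcases Nat.eq_zero_or_pos s with h | h
    · exact Or.inl h
    · have hs1 : s - 1 < s := by omega
      have := cnt_succ σ (s-1)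
      rw [show s - 1 + 1 = s by omega] at this
      split at this
      · assumption
      · have := hmin (s-1) hs1; omega
  refine ⟨s, hsm, hsc, hrs, hmin, ?_⟩
  intro p hp hpc
  rcases Nat.lt_trichotomy p s with h | h | h
  · have := hmin p h; omega
  · subst h; exact le_refl _
  · exact (entry_lt_of_cnt_eq σ p s hp h (by omega)).le

/-- the run-index function extracted from a flattened permutation -/
noncomputable def gof (σ : Equiv.Perm (Fin m)) (hσ : σ ∈ flatSet m k) : Fin m → Fin k :=
  fun v => ⟨cnt σ ((σ.symm v : ℕ)) - 1, by
    have hm : 0 < m := (σ.symm v).pos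
    have hk : runCount σ = k := (Finset.mem_filter.mp hσ).2.2
    have h1 : cnt σ ((σ.symm v : ℕ)) ≤ cnt σ (m-1) := cnt_mono σ (by
      have := (σ.symm v).isLt; omega)
    rw [cnt_total σ hm, hk] at h1
    have h2 := cnt_pos σ ((σ.symm v : ℕ))
    omega⟩

lemma gof_val (σ : Equiv.Perm (Fin m)) (hσ : σ ∈ flatSet m k) (v : Fin m) :
    (gof σ hσ v : ℕ) = cnt σ ((σ.symm v : ℕ)) - 1 := rfl

lemma entry_apply (σ : Equiv.Perm (Fin m)) (p : Fin m) :
    entry σ (p : ℕ) = (σ p : ℕ) := by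
  rw [entry, dif_pos p.isLt]

lemma entry_symm (σ : Equiv.Perm (Fin m)) (v : Fin m) :
    entry σ ((σ.symm v : ℕ)) = (v : ℕ) := by
  rw [entry_apply, Equiv.apply_symm_apply]

lemma gof_ok (σ : Equiv.Perm (Fin m)) (hσ : σ ∈ flatSet m k) (hm : 0 < m) :
    OK (gof σ hσ) := by
  have hfl : IsFlattened σ := (Finset.mem_filter.mp hσ).2.1
  have hk : runCount σ = k := (Finset.mem_filter.mp hσ).2.2
  have cnt_le_k : ∀ p, p < m → cnt σ p ≤ k := by
    intro p hp
    have h1 : cnt σ p ≤ cnt σ (m-1) := cnt_mono σ (by omega)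
    rw [cnt_total σ hm, hk] at h1
    exact h1
  refine ⟨?_, ?_, ?_⟩
  · -- CondA
    intro i
    obtain ⟨s, hsm, hsc, -, -, -⟩ :=
      leader_spec σ hm (c := (i : ℕ) + 1) (by omega) (by rw [hk]; exact i.isLt)
    refine ⟨σ ⟨s, hsm⟩, ?_⟩
    apply Fin.ext
    rw [gof_val, Equiv.symm_apply_apply]
    show cnt σ s - 1 = (i : ℕ)
    omega
  · -- CondB
    intro v w hvw
    rw [Fin.lt_iff_val_lt_val, gof_val, gof_val] at hvw
    have hposv := cnt_pos σ ((σ.symm v : ℕ))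
    have hposw := cnt_pos σ ((σ.symm w : ℕ))
    set c := cnt σ ((σ.symm v : ℕ)) with hc
    set c' := cnt σ ((σ.symm w : ℕ)) with hc'
    have hcc : c < c' := by omega
    have hc'k : c' ≤ runCount σ := by
      rw [hk]; exact cnt_le_k _ (σ.symm w).isLt
    obtain ⟨s, hsm, hsc, hsr, -, hsmin⟩ := leader_spec σ hm (c := c) (by omega) (by omega)
    obtain ⟨s', hsm', hsc', hsr', -, hsmin'⟩ := leader_spec σ hm (c := c') (by omega) hc'k
    have hss : s < s' := by
      by_contra hcon
      push_neg at hcon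
      have := cnt_mono σ hcon
      omega
    have hlead : entry σ s < entry σ s' := hfl s hsm s' hsm' hsr hsr' hss
    refine ⟨σ ⟨s, hsm⟩, ?_, ?_⟩
    · apply Fin.ext
      rw [gof_val, gof_val, Equiv.symm_apply_apply]
      show cnt σ s - 1 = cnt σ ((σ.symm v : ℕ)) - 1
      omega
    · rw [Fin.lt_iff_val_lt_val]
      have e1 : (↑(σ ⟨s, hsm⟩) : ℕ) = entry σ s := (entry_apply σ ⟨s, hsm⟩).symm
      have e2 : entry σ s' ≤ entry σ ((σ.symm w : ℕ)) :=
        hsmin' _ (σ.symm w).isLt rfl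
      rw [entry_symm] at e2
      omega
  · -- CondC
    intro v h0 hminv
    rw [gof_val] at h0
    have hposv := cnt_pos σ ((σ.symm v : ℕ))
    set c := cnt σ ((σ.symm v : ℕ)) with hc
    have hc2 : 2 ≤ c := by omega
    have hck : c ≤ runCount σ := by rw [hk]; exact cnt_le_k _ (σ.symm v).isLt
    obtain ⟨s, hsm, hsc, hsr, hsmin0, hsmin⟩ := leader_spec σ hm (c := c) (by omega) hck
    -- v is the entry at s
    have hvu : (v : ℕ) = entry σ s := by
      have h1 : entry σ s ≤ (v : ℕ) := by
        have := hsmin _ (σ.symm v).isLt rfl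
        rwa [entry_symm] at this
      have h2 : v ≤ σ ⟨s, hsm⟩ := by
        apply hminv
        apply Fin.ext
        rw [gof_val, gof_val, Equiv.symm_apply_apply]
        show cnt σ s - 1 = cnt σ ((σ.symm v : ℕ)) - 1
        omega
      rw [Fin.le_iff_val_le_val] at h2
      rw [entry_apply σ ⟨s, hsm⟩] at h1 ⊢
      omega
    have hs0 : s ≠ 0 := by
      intro h; rw [h, cnt_zero] at hsc; omega
    have hdesc : entry σ s < entry σ (s-1) := by
      rcases hsr with h | h
      · omega
      · exact h
    have hs1m : s - 1 < m := by omega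
    have hcnts1 : cnt σ (s-1) = c - 1 := by
      have h1 := hsmin0 (s-1) (by omega)
      have h2 := cnt_succ σ (s-1)
      rw [show s - 1 + 1 = s by omega] at h2
      split at h2 <;> omega
    refine ⟨σ ⟨s-1, hs1m⟩, ?_, ?_⟩
    · rw [gof_val, Equiv.symm_apply_apply]
      show cnt σ (s-1) - 1 + 1 = (gof σ hσ v : ℕ)
      rw [gof_val]
      omega
    · rw [Fin.lt_iff_val_lt_val]
      have e1 : (↑(σ ⟨s-1, hs1m⟩) : ℕ) = entry σ (s-1) := (entry_apply σ ⟨s-1, hs1m⟩).symm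
      omega

lemma gof_mem_G (σ : Equiv.Perm (Fin m)) (hσ : σ ∈ flatSet m k) (hm : 0 < m) :
    gof σ hσ ∈ G m k :=
  Finset.mem_filter.mpr ⟨Finset.mem_univ _, gof_ok σ hσ hm⟩


lemma strictMono_of_adj {α : Type*} [Preorder α] {F : Fin m → α}
    (h : ∀ (p : ℕ) (hp : p + 1 < m), F ⟨p, by omega⟩ < F ⟨p+1, hp⟩) : StrictMono F := by
  intro a b hab
  obtain ⟨i, hi⟩ := a
  obtain ⟨j, hj⟩ := b
  have hab' : i < j := hab
  have key : ∀ j (hj : j < m) i (hi : i < m), i < j → F ⟨i, hi⟩ < F ⟨j, hj⟩ := by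
    intro j
    induction j with
    | zero => omega
    | succ j ih =>
      intro hj i hi hij
      rcases Nat.lt_or_ge i j with h' | h'
      · exact lt_trans (ih (by omega) i hi h') (h j hj)
      · have hij' : i = j := by omega
        subst hij'
        exact h i hj
  exact key j hj i hi hab'

lemma perm_gof (σ : Equiv.Perm (Fin m)) (hσ : σ ∈ flatSet m k) (hm : 0 < m) :
    perm (gof σ hσ) = σ := by
  set g := gof σ hσ with hgdef
  have hF : StrictMono (fun p : Fin m => keyf g (σ p)) := by
    apply strictMono_of_adj
    intro p hp
    have hp' : p < m := by omega
    have e0 : (g (σ ⟨p, hp'⟩) : ℕ) = cnt σ p - 1 := by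
      rw [hgdef, gof_val, Equiv.symm_apply_apply]
    have e1 : (g (σ ⟨p+1, hp⟩) : ℕ) = cnt σ (p+1) - 1 := by
      rw [hgdef, gof_val, Equiv.symm_apply_apply]
    have sv0 : ((σ ⟨p, hp'⟩ : Fin m) : ℕ) = entry σ p := (entry_apply σ ⟨p, hp'⟩).symm
    have sv1 : ((σ ⟨p+1, hp⟩ : Fin m) : ℕ) = entry σ (p+1) := (entry_apply σ ⟨p+1, hp⟩).symm
    have hcp := cnt_pos σ p
    have hvm : entry σ p < m := by rw [← sv0]; exact (σ _).isLt
    rw [keyf, keyf, e0, e1, sv0, sv1]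
    by_cases hr : WordRunStart (entry σ) (p+1)
    · have hstep := cnt_succ σ p
      rw [if_pos hr] at hstep
      rw [hstep]
      have h1 : m ≤ cnt σ p * m := Nat.le_mul_of_pos_left m (by omega)
      have h2 : (cnt σ p - 1) * m = cnt σ p * m - 1 * m := Nat.sub_mul _ _ _
      have h3 : (cnt σ p + 1 - 1) * m = cnt σ p * m := by
        rw [Nat.add_sub_cancel]
      rw [h3]
      omega
    · have hstep := cnt_succ σ p
      rw [if_neg hr] at hstep
      rw [hstep]
      have := entry_lt_of_not_runstart σ hp hr
      omega
  have hE : StrictMono (fun p : Fin m => ((oi g p : ℕ))) := oi_strictMono g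
  have hrangeE : Set.range (fun p : Fin m => ((oi g p : ℕ))) = ↑(keyset g) := by
    have h := Finset.range_orderEmbOfFin (keyset g) (keyset_card g)
    rw [← h]
    rfl
  have hrangeF : Set.range (fun p : Fin m => keyf g (σ p)) = ↑(keyset g) := by
    have h1 : Set.range (fun p : Fin m => keyf g (σ p)) = Set.range (keyf g) :=
      Function.Surjective.range_comp σ.surjective (keyf g)
    rw [h1, keyset, Finset.coe_image, Finset.coe_univ, Set.image_univ]
  have hwf : WellFoundedLT (Fin m) := inferInstance
  have hEF : (fun p : Fin m => ((oi g p : ℕ))) = fun p : Fin m => keyf g (σ p) :=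
    (StrictMono.range_inj hE hF).1 (by rw [hrangeE, hrangeF])
  apply Equiv.ext
  intro p
  apply Fin.ext
  show ((oi g p : ℕ)) % m = ((σ p : Fin m) : ℕ)
  rw [congrFun hEF p, keyf_mod]

lemma gof_perm (g : Fin m → Fin k) (hg : OK g) (h' : perm g ∈ flatSet m k) :
    gof (perm g) h' = g := by
  funext v
  apply Fin.ext
  rw [gof_val]
  set p := (perm g).symm v with hpdef
  have hw : word g p = v := (perm g).apply_symm_apply v
  have hcnt : cnt (perm g) (p : ℕ) = Q g p + 1 := by
    have h := count_runstarts g hg (p : ℕ) p.isLt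
    rw [cnt, h]
  rw [hcnt]
  show Q g p + 1 - 1 = (g v : ℕ)
  rw [Q, hw]
  omega

lemma G_card_eq_flat (hm : 0 < m) : (G m k).card = (flatSet m k).card := by
  exact Finset.card_bij' (fun g _ => perm g) (fun σ hσ => gof σ hσ)
    (fun g hg => perm_mem_flatSet g (Finset.mem_filter.mp hg).2 hm)
    (fun σ hσ => gof_mem_G σ hσ hm)
    (fun g hg => gof_perm g (Finset.mem_filter.mp hg).2 _)
    (fun σ hσ => perm_gof σ hσ hm)


/-! ### partition side -/

section PartitionSide

variable {n k : ℕ}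

/-- the big blocks of a partition -/
def BigsP (P : Finpartition (Finset.univ : Finset (Fin n))) : Finset (Finset (Fin n)) :=
  P.parts.filter fun b => 1 < b.card

/-- the rank of a block: the number of big blocks with smaller minimum -/
def rk (P : Finpartition (Finset.univ : Finset (Fin n))) (b : Finset (Fin n)) : ℕ :=
  ((BigsP P).filter fun b' => b'.min < b.min).card

/-- number of big blocks with minimum less than `w` -/
def nbelow (P : Finpartition (Finset.univ : Finset (Fin n))) (w : Fin n) : ℕ :=
  ((BigsP P).filter fun b' => b'.min < (↑w : WithTop (Fin n))).card

variable {P : Finpartition (Finset.univ : Finset (Fin n))}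

lemma nonempty_of_mem_bigs {b : Finset (Fin n)} (hb : b ∈ BigsP P) : b.Nonempty :=
  P.nonempty_of_mem_parts (Finset.mem_filter.mp hb).1

lemma min_inj_parts {b b' : Finset (Fin n)} (hb : b ∈ P.parts) (hb' : b' ∈ P.parts)
    (h : b.min = b'.min) : b = b' := by
  have h1 : b.Nonempty := P.nonempty_of_mem_parts hb
  have h2 : b'.Nonempty := P.nonempty_of_mem_parts hb'
  have e1 : b.min = ↑(b.min' h1) := (Finset.coe_min' h1).symm
  have e2 : b'.min = ↑(b'.min' h2) := (Finset.coe_min' h2).symm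
  rw [e1, e2] at h
  have hm : b.min' h1 = b'.min' h2 := by exact_mod_cast h
  apply P.eq_of_mem_parts hb hb' (Finset.min'_mem b h1)
  rw [hm]; exact Finset.min'_mem b' h2

lemma rk_lt_of_min_lt {b b' : Finset (Fin n)} (hb : b ∈ BigsP P) (hb' : b' ∈ BigsP P)
    (h : b.min < b'.min) : rk P b < rk P b' := by
  apply Finset.card_lt_card
  constructor
  · intro x hx
    rw [Finset.mem_filter] at hx ⊢
    exact ⟨hx.1, lt_trans hx.2 h⟩
  · intro hsub
    have : b ∈ (BigsP P).filter fun b'' => b''.min < b'.min :=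
      Finset.mem_filter.mpr ⟨hb, h⟩
    have := hsub this
    rw [Finset.mem_filter] at this
    exact lt_irrefl _ this.2

lemma rk_inj {b b' : Finset (Fin n)} (hb : b ∈ BigsP P) (hb' : b' ∈ BigsP P)
    (h : rk P b = rk P b') : b = b' := by
  rcases lt_trichotomy b.min b'.min with hlt | heq | hgt
  · exact absurd h (rk_lt_of_min_lt hb hb' hlt).ne
  · exact min_inj_parts (Finset.mem_filter.mp hb).1 (Finset.mem_filter.mp hb').1 heq
  · exact absurd h.symm (rk_lt_of_min_lt hb' hb hgt).ne

lemma min_lt_of_rk_lt {b b' : Finset (Fin n)} (hb : b ∈ BigsP P) (hb' : b' ∈ BigsP P)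
    (h : rk P b < rk P b') : b.min < b'.min := by
  rcases lt_trichotomy b.min b'.min with hlt | heq | hgt
  · exact hlt
  · exact absurd (min_inj_parts (Finset.mem_filter.mp hb).1 (Finset.mem_filter.mp hb').1 heq)
      (by rintro rfl; omega)
  · exact absurd (rk_lt_of_min_lt hb' hb hgt) (by omega)

lemma rk_lt_card {b : Finset (Fin n)} (hb : b ∈ BigsP P) :
    rk P b < (BigsP P).card := by
  apply Finset.card_lt_card
  constructor
  · exact Finset.filter_subset _ _
  · intro hsub
    have := hsub hb
    rw [Finset.mem_filter] at this
    exact lt_irrefl _ this.2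

lemma rk_surj (hP : (BigsP P).card = k - 1) {c : ℕ} (hc : c < k - 1) :
    ∃ b ∈ BigsP P, rk P b = c := by
  have hinj : Set.InjOn (rk P) (BigsP P) := fun b hb b' hb' h => rk_inj hb hb' h
  have hcard : ((BigsP P).image (rk P)).card = k - 1 := by
    rw [Finset.card_image_of_injOn hinj, hP]
  have hsub : (BigsP P).image (rk P) ⊆ Finset.range (k-1) := by
    intro c' hc'
    obtain ⟨b, hb, rfl⟩ := Finset.mem_image.mp hc'
    rw [Finset.mem_range, ← hP]
    exact rk_lt_card hb
  have heq : (BigsP P).image (rk P) = Finset.range (k-1) :=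
    Finset.eq_of_subset_of_card_le hsub (by rw [hcard, Finset.card_range])
  have : c ∈ (BigsP P).image (rk P) := by
    rw [heq, Finset.mem_range]; exact hc
  obtain ⟨b, hb, hbc⟩ := Finset.mem_image.mp this
  exact ⟨b, hb, hbc⟩

lemma min_le_of_mem {b : Finset (Fin n)} {w : Fin n} (hw : w ∈ b) :
    b.min ≤ (↑w : WithTop (Fin n)) := Finset.min_le hw

lemma nbelow_ge {b : Finset (Fin n)} {w : Fin n} (hb : b ∈ BigsP P)
    (h : b.min < (↑w : WithTop (Fin n))) : rk P b + 1 ≤ nbelow P w := by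
  have hsub : insert b ((BigsP P).filter fun b'' => b''.min < b.min) ⊆
      (BigsP P).filter fun b' => b'.min < (↑w : WithTop (Fin n)) := by
    intro x hx
    rcases Finset.mem_insert.mp hx with rfl | hx
    · exact Finset.mem_filter.mpr ⟨hb, h⟩
    · rw [Finset.mem_filter] at hx ⊢
      exact ⟨hx.1, lt_trans hx.2 h⟩
  have hcard := Finset.card_le_card hsub
  rw [Finset.card_insert_of_notMem (by
    intro hmem
    rw [Finset.mem_filter] at hmem
    exact lt_irrefl _ hmem.2)] at hcard
  exact hcard

lemma nbelow_le_rk {b : Finset (Fin n)} {w : Fin n}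
    (h : (↑w : WithTop (Fin n)) ≤ b.min) : nbelow P w ≤ rk P b := by
  apply Finset.card_le_card
  intro x hx
  rw [Finset.mem_filter] at hx ⊢
  exact ⟨hx.1, lt_of_lt_of_le hx.2 h⟩


/-- the run index associated by a partition to the letter `v` -/
def gnat (P : Finpartition (Finset.univ : Finset (Fin n))) : Fin (n+1) → ℕ := fun v =>
  if h0 : v = 0 then 0 else
    let w := v.pred h0
    if 1 < (P.part w).card then
      if (↑w : WithTop (Fin n)) = (P.part w).min then rk P (P.part w) + 1
      else rk P (P.part w)
    else nbelow P w

lemma gnat_zero : gnat P 0 = 0 := by simp [gnat]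

lemma gnat_succ_big_min {w : Fin n} (hbig : 1 < (P.part w).card)
    (hmin : (↑w : WithTop (Fin n)) = (P.part w).min) :
    gnat P w.succ = rk P (P.part w) + 1 := by
  rw [gnat, dif_neg (Fin.succ_ne_zero w)]
  simp only [Fin.pred_succ]
  rw [if_pos hbig, if_pos hmin]

lemma gnat_succ_big_nonmin {w : Fin n} (hbig : 1 < (P.part w).card)
    (hmin : (↑w : WithTop (Fin n)) ≠ (P.part w).min) :
    gnat P w.succ = rk P (P.part w) := by
  rw [gnat, dif_neg (Fin.succ_ne_zero w)]
  simp only [Fin.pred_succ]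
  rw [if_pos hbig, if_neg hmin]

lemma gnat_succ_single {w : Fin n} (hbig : ¬ 1 < (P.part w).card) :
    gnat P w.succ = nbelow P w := by
  rw [gnat, dif_neg (Fin.succ_ne_zero w)]
  simp only [Fin.pred_succ]
  rw [if_neg hbig]

lemma part_mem_bigs {w : Fin n} (hbig : 1 < (P.part w).card) : P.part w ∈ BigsP P :=
  Finset.mem_filter.mpr ⟨P.part_mem.mpr (Finset.mem_univ w), hbig⟩

lemma nbelow_le (w : Fin n) : nbelow P w ≤ (BigsP P).card :=
  Finset.card_le_card (Finset.filter_subset _ _)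

lemma gnat_lt (hP : (BigsP P).card = k - 1) (hk : 0 < k) (v : Fin (n+1)) :
    gnat P v < k := by
  induction v using Fin.cases with
  | zero => rw [gnat_zero]; omega
  | succ w =>
    by_cases hbig : 1 < (P.part w).card
    · have h1 : rk P (P.part w) < (BigsP P).card := rk_lt_card (part_mem_bigs hbig)
      have h2 : 1 ≤ (BigsP P).card := Finset.card_pos.mpr ⟨_, part_mem_bigs hbig⟩
      by_cases hmin : (↑w : WithTop (Fin n)) = (P.part w).min
      · rw [gnat_succ_big_min hbig hmin]; omega
      · rw [gnat_succ_big_nonmin hbig hmin]; omega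
    · rw [gnat_succ_single hbig]
      have := nbelow_le (P := P) w
      omega

/-- a big block of a given rank, chosen arbitrarily -/
noncomputable def bAt (P : Finpartition (Finset.univ : Finset (Fin n))) (c : ℕ) :
    Finset (Fin n) :=
  if h : ∃ b ∈ BigsP P, rk P b = c then h.choose else ∅

lemma bAt_spec {c : ℕ} (h : ∃ b ∈ BigsP P, rk P b = c) :
    bAt P c ∈ BigsP P ∧ rk P (bAt P c) = c := by
  rw [bAt, dif_pos h]
  exact h.choose_spec

/-- the leader of the `i`-th run -/
noncomputable def lead (P : Finpartition (Finset.univ : Finset (Fin n))) (i : ℕ) :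
    Fin (n+1) :=
  if h : (bAt P (i-1)).Nonempty ∧ i ≠ 0 then ((bAt P (i-1)).min' h.1).succ else 0

lemma lead_zero : lead P 0 = 0 := by simp [lead]

lemma lead_spec (hP : (BigsP P).card = k - 1) (hk : 0 < k) {i : ℕ}
    (h1 : 1 ≤ i) (h2 : i ≤ k - 1) :
    ∃ b, b ∈ BigsP P ∧ rk P b = i - 1 ∧
      ∃ hb : b.Nonempty, lead P i = (b.min' hb).succ := by
  have hc : ∃ b ∈ BigsP P, rk P b = i - 1 := rk_surj hP (by omega)
  obtain ⟨hmem, hrk⟩ := bAt_spec hc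
  have hne : (bAt P (i-1)).Nonempty := nonempty_of_mem_bigs hmem
  refine ⟨bAt P (i-1), hmem, hrk, hne, ?_⟩
  rw [lead, dif_pos ⟨hne, by omega⟩]

/-- L1 : the leader of run `i` has `gnat` equal to `i` -/
lemma gnat_lead (hP : (BigsP P).card = k - 1) (hk : 0 < k) {i : ℕ} (hi : i ≤ k - 1) :
    gnat P (lead P i) = i := by
  rcases Nat.eq_zero_or_pos i with rfl | hpos
  · rw [lead_zero, gnat_zero]
  · obtain ⟨b, hmem, hrk, hne, hlead⟩ := lead_spec hP hk hpos hi
    rw [hlead]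
    have hwb : b.min' hne ∈ b := Finset.min'_mem b hne
    have hpart : P.part (b.min' hne) = b :=
      P.part_eq_of_mem (Finset.mem_filter.mp hmem).1 hwb
    have hbig : 1 < (P.part (b.min' hne)).card := by
      rw [hpart]; exact (Finset.mem_filter.mp hmem).2
    have hmin : (↑(b.min' hne) : WithTop (Fin n)) = (P.part (b.min' hne)).min := by
      rw [hpart]; exact Finset.coe_min' hne
    rw [gnat_succ_big_min hbig hmin, hpart, hrk]
    omega

/-- L2 : the leader of the run of `v` is at most `v` -/
lemma lead_le (hP : (BigsP P).card = k - 1) (hk : 0 < k) (v : Fin (n+1)) :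
    lead P (gnat P v) ≤ v := by
  induction v using Fin.cases with
  | zero => rw [gnat_zero, lead_zero]
  | succ w =>
    by_cases hbig : 1 < (P.part w).card
    · have hmem : P.part w ∈ BigsP P := part_mem_bigs hbig
      have hwp : w ∈ P.part w := P.mem_part (Finset.mem_univ w)
      by_cases hmin : (↑w : WithTop (Fin n)) = (P.part w).min
      · rw [gnat_succ_big_min hbig hmin]
        have hrklt : rk P (P.part w) < (BigsP P).card := rk_lt_card hmem
        obtain ⟨b, hbm, hbrk, hbne, hblead⟩ :=
          lead_spec hP hk (i := rk P (P.part w) + 1) (by omega) (by omega)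
        have hbe : b = P.part w := rk_inj hbm hmem (by omega)
        subst hbe
        rw [hblead]
        have hw : (P.part w).min' hbne = w := by
          have h1 : (↑((P.part w).min' hbne) : WithTop (Fin n)) = (↑w : WithTop (Fin n)) := by
            rw [Finset.coe_min' hbne, ← hmin]
          exact_mod_cast h1
        rw [hw]
      · rw [gnat_succ_big_nonmin hbig hmin]
        rcases Nat.eq_zero_or_pos (rk P (P.part w)) with hz | hpos
        · rw [hz, lead_zero]
          exact (Fin.succ_pos w).le
        · have hrklt : rk P (P.part w) < (BigsP P).card := rk_lt_card hmem
          obtain ⟨b, hbm, hbrk, hbne, hblead⟩ :=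
            lead_spec hP hk (i := rk P (P.part w)) (by omega) (by omega)
          rw [hblead]
          have hminlt : b.min < (P.part w).min :=
            min_lt_of_rk_lt hbm hmem (by omega)
          have h2 : b.min < (↑w : WithTop (Fin n)) :=
            lt_of_lt_of_le hminlt (min_le_of_mem hwp)
          rw [← Finset.coe_min' hbne, WithTop.coe_lt_coe] at h2
          exact (Fin.succ_lt_succ_iff.mpr h2).le
    · rw [gnat_succ_single hbig]
      rcases Nat.eq_zero_or_pos (nbelow P w) with hz | hpos
      · rw [hz, lead_zero]
        exact (Fin.succ_pos w).le
      · have hub := nbelow_le (P := P) w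
        obtain ⟨b, hbm, hbrk, hbne, hblead⟩ :=
          lead_spec hP hk (i := nbelow P w) (by omega) (by omega)
        rw [hblead]
        have hminlt : b.min < (↑w : WithTop (Fin n)) := by
          by_contra hcon
          push_neg at hcon
          have := nbelow_le_rk (P := P) (b := b) (w := w) hcon
          omega
        rw [← Finset.coe_min' hbne, WithTop.coe_lt_coe] at hminlt
        exact (Fin.succ_lt_succ_iff.mpr hminlt).le

/-- L3 : leaders increase -/
lemma lead_lt_lead (hP : (BigsP P).card = k - 1) (hk : 0 < k) {i j : ℕ}
    (hij : i < j) (hj : j ≤ k - 1) : lead P i < lead P j := by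
  obtain ⟨b, hbm, hbrk, hbne, hblead⟩ := lead_spec hP hk (i := j) (by omega) hj
  rcases Nat.eq_zero_or_pos i with rfl | hpos
  · rw [lead_zero, hblead]
    exact Fin.succ_pos _
  · obtain ⟨c, hcm, hcrk, hcne, hclead⟩ := lead_spec hP hk (i := i) (by omega) (by omega)
    rw [hblead, hclead]
    have hlt : c.min < b.min := min_lt_of_rk_lt hcm hbm (by omega)
    rw [← Finset.coe_min' hbne, ← Finset.coe_min' hcne, WithTop.coe_lt_coe] at hlt
    exact Fin.succ_lt_succ_iff.mpr hlt


/-- run data extracted from a partition -/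
def gP (P : Finpartition (Finset.univ : Finset (Fin n)))
    (hP : (BigsP P).card = k - 1) (hk : 0 < k) : Fin (n+1) → Fin k :=
  fun v => ⟨gnat P v, gnat_lt hP hk v⟩

lemma gP_val (hP : (BigsP P).card = k - 1) (hk : 0 < k) (v : Fin (n+1)) :
    (gP P hP hk v : ℕ) = gnat P v := rfl

lemma gP_ok (hP : (BigsP P).card = k - 1) (hk : 0 < k) : OK (gP P hP hk) := by
  refine ⟨?_, ?_, ?_⟩
  · -- CondA
    intro i
    refine ⟨lead P (i : ℕ), ?_⟩
    apply Fin.ext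
    rw [gP_val]
    exact gnat_lead hP hk (by have := i.isLt; omega)
  · -- CondB
    intro v w hvw
    rw [Fin.lt_iff_val_lt_val, gP_val, gP_val] at hvw
    have hjk : gnat P w < k := gnat_lt hP hk w
    refine ⟨lead P (gnat P v), ?_, ?_⟩
    · apply Fin.ext
      rw [gP_val, gP_val]
      exact gnat_lead hP hk (by omega)
    · calc lead P (gnat P v) < lead P (gnat P w) := lead_lt_lead hP hk hvw (by omega)
        _ ≤ w := lead_le hP hk w
  · -- CondC
    intro v h0 hminv
    rw [gP_val] at h0
    have hik : gnat P v < k := gnat_lt hP hk v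
    have hvlead : v = lead P (gnat P v) := by
      have h1 : lead P (gnat P v) ≤ v := lead_le hP hk v
      have h2 : v ≤ lead P (gnat P v) := by
        apply hminv
        apply Fin.ext
        rw [gP_val, gP_val]
        exact gnat_lead hP hk (by omega)
      exact le_antisymm h2 h1
    obtain ⟨b, hbm, hbrk, hbne, hblead⟩ :=
      lead_spec hP hk (i := gnat P v) (by omega) (by omega)
    have hbig : 1 < b.card := (Finset.mem_filter.mp hbm).2
    have hmaxmem : b.max' hbne ∈ b := Finset.max'_mem b hbne
    have hpartmax : P.part (b.max' hbne) = b :=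
      P.part_eq_of_mem (Finset.mem_filter.mp hbm).1 hmaxmem
    have hminmax : b.min' hbne < b.max' hbne := Finset.min'_lt_max'_of_card b hbig
    have hnotmin : (↑(b.max' hbne) : WithTop (Fin n)) ≠ (P.part (b.max' hbne)).min := by
      rw [hpartmax, ← Finset.coe_min' hbne]
      intro hcon
      have : b.max' hbne = b.min' hbne := by exact_mod_cast hcon
      omega
    have hgmax : gnat P (b.max' hbne).succ = rk P b := by
      rw [gnat_succ_big_nonmin (by rw [hpartmax]; exact hbig) hnotmin, hpartmax]
    refine ⟨(b.max' hbne).succ, ?_, ?_⟩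
    · rw [gP_val, hgmax, gP_val]
      omega
    · rw [hvlead, hblead]
      exact Fin.succ_lt_succ_iff.mpr hminmax


/-! ### from run data to partitions -/

/-- the label of `w`: block index of its block (`< k-1` for big blocks,
`k + w` for singletons) -/
def lbl (g : Fin (n+1) → Fin k) (w : Fin n) : ℕ :=
  if 0 < (g w.succ : ℕ) ∧ ∀ u, g u = g w.succ → w.succ ≤ u then (g w.succ : ℕ) - 1
  else if ∃ u, (g u : ℕ) = (g w.succ : ℕ) + 1 ∧ u < w.succ then (g w.succ : ℕ)
  else k + (w : ℕ)

/-- the partition associated to run data -/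
def pOf (g : Fin (n+1) → Fin k) : Finpartition (Finset.univ : Finset (Fin n)) :=
  letI : DecidableRel ⇑(Setoid.ker (lbl g)) := fun a b => Nat.decEq (lbl g a) (lbl g b)
  Finpartition.ofSetoid (Setoid.ker (lbl g))

lemma mem_part_pOf (g : Fin (n+1) → Fin k) (a b : Fin n) :
    b ∈ (pOf g).part a ↔ lbl g a = lbl g b := by
  letI : DecidableRel ⇑(Setoid.ker (lbl g)) := fun a b => Nat.decEq (lbl g a) (lbl g b)
  exact Finpartition.mem_part_ofSetoid_iff_rel

lemma part_pOf_eq (g : Fin (n+1) → Fin k) (a : Fin n) :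
    (pOf g).part a = Finset.univ.filter fun b => lbl g a = lbl g b := by
  ext b
  rw [mem_part_pOf, Finset.mem_filter]
  simp

variable {g : Fin (n+1) → Fin k}

lemma g_zero (hg : OK g) : (g 0 : ℕ) = 0 := by
  have hk : 0 < k := (g 0).pos
  obtain ⟨v, hv⟩ := hg.1 ⟨0, hk⟩
  by_contra h
  have hv' : (g v : ℕ) = 0 := by rw [hv]
  have hlt : g v < g 0 := by
    rw [Fin.lt_iff_val_lt_val, hv']
    omega
  obtain ⟨u, -, hu⟩ := hg.2.1 v 0 hlt
  exact absurd hu (Fin.not_lt_zero u)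

lemma exists_cmin (hg : OK g) {c : ℕ} (hc : c < k) :
    ∃ v, (g v : ℕ) = c ∧ ∀ u, (g u : ℕ) = c → v ≤ u := by
  obtain ⟨v0, hv0⟩ := hg.1 ⟨c, hc⟩
  set C := Finset.univ.filter (fun u => (g u : ℕ) = c) with hC
  have hne : C.Nonempty := ⟨v0, Finset.mem_filter.mpr ⟨Finset.mem_univ _, by rw [hv0]⟩⟩
  refine ⟨C.min' hne, ?_, ?_⟩
  · exact (Finset.mem_filter.mp (C.min'_mem hne)).2
  · intro u hu
    exact C.min'_le u (Finset.mem_filter.mpr ⟨Finset.mem_univ _, hu⟩)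

lemma min_lt_of_class_lt (hg : OK g) {v w : Fin (n+1)} {c c' : ℕ}
    (hvc : (g v : ℕ) = c) (hvmin : ∀ u, (g u : ℕ) = c → v ≤ u)
    (hwc : (g w : ℕ) = c') (hcc : c < c') : v < w := by
  have hlt : g v < g w := by rw [Fin.lt_iff_val_lt_val, hvc, hwc]; exact hcc
  obtain ⟨u, hu1, hu2⟩ := hg.2.1 v w hlt
  have : v ≤ u := hvmin u (by rw [hu1, hvc])
  exact lt_of_le_of_lt this hu2

lemma min_unique (hg : OK g) {v w : Fin (n+1)} {c : ℕ}
    (hvc : (g v : ℕ) = c) (hvmin : ∀ u, (g u : ℕ) = c → v ≤ u)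
    (hwc : (g w : ℕ) = c) (hwmin : ∀ u, (g u : ℕ) = c → w ≤ u) : v = w :=
  le_antisymm (hvmin w hwc) (hwmin v hvc)

/-- the fiber of the labelling -/
def fib (g : Fin (n+1) → Fin k) (c : ℕ) : Finset (Fin n) :=
  Finset.univ.filter fun w => lbl g w = c

lemma mem_fib {c : ℕ} {w : Fin n} : w ∈ fib g c ↔ lbl g w = c := by
  rw [fib, Finset.mem_filter]
  simp

/-- structure of fibers below `k-1`: two distinct elements, and the smallest
element's successor is the minimum of class `i+1` -/
lemma fib_pair (hg : OK g) {i : ℕ} (hi : i < k - 1) :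
    ∃ w1 w2 : Fin n, w1 < w2 ∧ lbl g w1 = i ∧ lbl g w2 = i ∧
      (∀ w, lbl g w = i → w1 ≤ w) ∧
      (g w1.succ : ℕ) = i + 1 ∧ (∀ u, (g u : ℕ) = i + 1 → w1.succ ≤ u) := by
  have hk : 0 < k := (g 0).pos
  have hik : i + 1 < k := by omega
  obtain ⟨vmin, hvg, hvmin⟩ := exists_cmin hg hik
  have hv0 : vmin ≠ 0 := by
    intro h
    rw [h, g_zero hg] at hvg
    omega
  set w1 := vmin.pred hv0 with hw1
  have hs1 : w1.succ = vmin := Fin.succ_pred _ _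
  have hlbl1 : lbl g w1 = i := by
    rw [lbl]
    rw [if_pos ⟨by rw [hs1]; omega, by
      rw [hs1]
      intro u hu
      exact hvmin u (by rw [hu, hvg])⟩]
    rw [hs1, hvg]
    omega
  obtain ⟨u, hu1, hu2⟩ := hg.2.2 vmin (by omega) (by
    intro u hu
    exact hvmin u (by rw [hu, hvg]))
  rw [hvg] at hu1
  have hui : (g u : ℕ) = i := by omega
  have hu0 : u ≠ 0 := by
    intro h
    subst h
    exact absurd hu2 (Fin.not_lt_zero _)
  set w2 := u.pred hu0 with hw2
  have hs2 : w2.succ = u := Fin.succ_pred _ _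
  have hw12 : w1 < w2 := by
    rw [← Fin.succ_lt_succ_iff, hs1, hs2]
    exact hu2
  have hlbl2 : lbl g w2 = i := by
    rw [lbl]
    rw [if_neg, if_pos ⟨vmin, by rw [hs2, hvg, hui], by rw [hs2]; exact hu2⟩]
    · rw [hs2, hui]
    · rintro ⟨hpos, hall⟩
      rw [hs2, hui] at hpos
      rw [hs2] at hall
      -- u is not the minimum of its class
      obtain ⟨u', hu'1, hu'2⟩ := hg.2.1 u vmin (by
        rw [Fin.lt_iff_val_lt_val, hui, hvg]; omega)
      have h1 : u ≤ u' := hall u' hu'1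
      have h2 : u' < u := lt_trans hu'2 hu2
      exact absurd h1 (not_le.mpr h2)
  refine ⟨w1, w2, hw12, hlbl1, hlbl2, ?_, by rw [hs1]; exact hvg, by
    rw [hs1]; exact hvmin⟩
  intro w hw
  rw [lbl] at hw
  split_ifs at hw with h1 h2
  · -- w.succ is the minimum of class i+1 as well
    have hwg : (g w.succ : ℕ) = i + 1 := by omega
    have : vmin = w.succ := min_unique hg hvg hvmin hwg (by
      intro u' hu'
      apply h1.2
      apply Fin.ext
      rw [hu', hwg])
    rw [← hs1] at this
    have := Fin.succ_injective _ this
    omega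
  · obtain ⟨u', hu'1, hu'2⟩ := h2
    rw [hw] at hu'1
    have h3 : vmin ≤ u' := hvmin u' hu'1
    have h4 : vmin < w.succ := lt_of_le_of_lt h3 hu'2
    rw [← hs1, Fin.succ_lt_succ_iff] at h4
    exact h4.le
  · have : k + (w : ℕ) = i := hw
    omega

lemma lbl_cases (w : Fin n) : lbl g w < k - 1 ∨ lbl g w = k + (w : ℕ) := by
  have hlt : (g w.succ : ℕ) < k := (g w.succ).isLt
  rw [lbl]
  split_ifs with h1 h2
  · left; omega
  · obtain ⟨u, hu1, -⟩ := h2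
    have := (g u).isLt
    left; omega
  · right; rfl

lemma lbl_single_inj {w w' : Fin n} (h : lbl g w = lbl g w')
    (hge : ¬ lbl g w < k - 1) : w = w' := by
  rcases lbl_cases (g := g) w with h1 | h1
  · exact absurd h1 hge
  · rcases lbl_cases (g := g) w' with h2 | h2
    · rw [h] at hge; exact absurd h2 hge
    · rw [h1, h2] at h
      apply Fin.ext
      omega

lemma pOf_big_iff (hg : OK g) (w : Fin n) :
    1 < ((pOf g).part w).card ↔ lbl g w < k - 1 := by
  constructor
  · intro h
    by_contra hge
    obtain ⟨a, ha, b, hb, hab⟩ := Finset.one_lt_card.mp h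
    rw [mem_part_pOf] at ha hb
    apply hab
    have hwa : w = a := lbl_single_inj ha hge
    have hwb : w = b := lbl_single_inj hb hge
    rw [← hwa, ← hwb]
  · intro h
    obtain ⟨w1, w2, h12, hl1, hl2, -, -, -⟩ := fib_pair hg h
    apply Finset.one_lt_card.mpr
    refine ⟨w1, ?_, w2, ?_, h12.ne⟩
    · rw [mem_part_pOf, hl1]
    · rw [mem_part_pOf, hl2]

lemma bigs_pOf (hg : OK g) :
    BigsP (pOf g) = (Finset.range (k-1)).image (fib g) := by
  ext b
  rw [BigsP, Finset.mem_filter, Finset.mem_image]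
  constructor
  · rintro ⟨hmem, hbig⟩
    obtain ⟨w, hw⟩ := (pOf g).nonempty_of_mem_parts hmem
    have hpart : (pOf g).part w = b := (pOf g).part_eq_of_mem hmem hw
    rw [← hpart] at hbig
    have hlt : lbl g w < k - 1 := (pOf_big_iff hg w).mp hbig
    refine ⟨lbl g w, Finset.mem_range.mpr hlt, ?_⟩
    rw [← hpart, part_pOf_eq]
    ext u
    rw [mem_fib, Finset.mem_filter]
    simp [eq_comm]
  · rintro ⟨i, hi, rfl⟩
    rw [Finset.mem_range] at hi
    obtain ⟨w1, w2, h12, hl1, hl2, -, -, -⟩ := fib_pair hg hi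
    have hpart : (pOf g).part w1 = fib g i := by
      rw [part_pOf_eq]
      ext u
      rw [mem_fib, Finset.mem_filter, hl1]
      simp [eq_comm]
    constructor
    · rw [← hpart]
      exact (pOf g).part_mem.mpr (Finset.mem_univ _)
    · rw [← hpart]
      exact (pOf_big_iff hg w1).mpr (by rw [hl1]; exact hi)

lemma card_bigs_pOf (hg : OK g) : (BigsP (pOf g)).card = k - 1 := by
  rw [bigs_pOf hg]
  rw [Finset.card_image_of_injOn, Finset.card_range]
  intro i hi j hj hij
  rw [Finset.mem_coe, Finset.mem_range] at hi hj
  obtain ⟨w1, -, -, hl1, -, -, -, -⟩ := fib_pair hg hi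
  have h1 : w1 ∈ fib g i := mem_fib.mpr hl1
  rw [hij] at h1
  rw [mem_fib] at h1
  omega


/-- the minimum of a small fiber -/
lemma fib_min (hg : OK g) {i : ℕ} (hi : i < k - 1) :
    ∃ w1 : Fin n, (fib g i).min = (↑w1 : WithTop (Fin n)) ∧ lbl g w1 = i ∧
      (∀ w, lbl g w = i → w1 ≤ w) ∧
      (g w1.succ : ℕ) = i + 1 ∧ (∀ u, (g u : ℕ) = i + 1 → w1.succ ≤ u) := by
  obtain ⟨w1, w2, h12, hl1, hl2, hmin, hcls, hclsmin⟩ := fib_pair hg hi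
  have hne : (fib g i).Nonempty := ⟨w1, mem_fib.mpr hl1⟩
  have hm : (fib g i).min' hne = w1 := by
    apply le_antisymm
    · exact Finset.min'_le _ _ (mem_fib.mpr hl1)
    · exact hmin _ (mem_fib.mp ((fib g i).min'_mem hne))
  refine ⟨w1, ?_, hl1, hmin, hcls, hclsmin⟩
  rw [← Finset.coe_min' hne, hm]

lemma fib_min_lt (hg : OK g) {i j : ℕ} (hi : i < k - 1) (hj : j < k - 1)
    (hij : i < j) : (fib g i).min < (fib g j).min := by
  obtain ⟨wi, hwi, -, -, hci, hcimin⟩ := fib_min hg hi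
  obtain ⟨wj, hwj, -, -, hcj, -⟩ := fib_min hg hj
  rw [hwi, hwj, WithTop.coe_lt_coe, ← Fin.succ_lt_succ_iff]
  exact min_lt_of_class_lt hg hci hcimin hcj (by omega)

lemma fib_min_lt_iff (hg : OK g) {i j : ℕ} (hi : i < k - 1) (hj : j < k - 1) :
    ((fib g i).min < (fib g j).min ↔ i < j) := by
  constructor
  · intro h
    rcases Nat.lt_trichotomy i j with h' | rfl | h'
    · exact h'
    · exact absurd h (lt_irrefl _)
    · exact absurd (fib_min_lt hg hj hi h') (by rw [not_lt]; exact h.le)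
  · exact fib_min_lt hg hi hj

lemma filter_range_card {i K : ℕ} (hik : i ≤ K) :
    ((Finset.range K).filter (fun j => j < i)).card = i := by
  have : (Finset.range K).filter (fun j => j < i) = Finset.range i := by
    ext a
    rw [Finset.mem_filter, Finset.mem_range, Finset.mem_range]
    omega
  rw [this, Finset.card_range]

lemma fib_injOn (hg : OK g) : Set.InjOn (fib g) (Finset.range (k-1)) := by
  intro i hi j hj hij
  rw [Finset.mem_coe, Finset.mem_range] at hi hj
  obtain ⟨w1, -, -, hl1, -, -, -, -⟩ := fib_pair hg hi
  have h1 : w1 ∈ fib g i := mem_fib.mpr hl1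
  rw [hij, mem_fib] at h1
  omega

lemma rk_fib (hg : OK g) {i : ℕ} (hi : i < k - 1) :
    rk (pOf g) (fib g i) = i := by
  rw [rk, bigs_pOf hg, Finset.filter_image]
  have hcong : (Finset.range (k-1)).filter (fun j => (fib g j).min < (fib g i).min)
      = (Finset.range (k-1)).filter (fun j => j < i) := by
    apply Finset.filter_congr
    intro j hj
    rw [Finset.mem_range] at hj
    simp only [fib_min_lt_iff hg hj hi]
  rw [hcong]
  rw [Finset.card_image_of_injOn (Set.InjOn.mono (by
    intro x hx
    rw [Finset.mem_coe, Finset.mem_filter] at hx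
    rw [Finset.mem_coe]
    exact hx.1) (fib_injOn hg))]
  exact filter_range_card (by omega)

lemma nbelow_pOf (hg : OK g) (w : Fin n) :
    nbelow (pOf g) w
      = ((Finset.range (k-1)).filter
          (fun j => (fib g j).min < (↑w : WithTop (Fin n)))).card := by
  rw [nbelow, bigs_pOf hg, Finset.filter_image]
  rw [Finset.card_image_of_injOn (Set.InjOn.mono (by
    intro x hx
    rw [Finset.mem_coe, Finset.mem_filter] at hx
    rw [Finset.mem_coe]
    exact hx.1) (fib_injOn hg))]

/-- Round trip 1: the run data extracted from `pOf g` is `g` again. -/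
lemma gnat_pOf (hg : OK g) (v : Fin (n+1)) : gnat (pOf g) v = (g v : ℕ) := by
  have hk : 0 < k := (g 0).pos
  induction v using Fin.cases with
  | zero => rw [gnat_zero, g_zero hg]
  | succ w =>
    set i0 := (g w.succ : ℕ) with hi0
    have hi0k : i0 < k := (g w.succ).isLt
    by_cases h1 : 0 < i0 ∧ ∀ u, g u = g w.succ → w.succ ≤ u
    · -- `w.succ` is the minimum of its (positive) class
      have hlbl : lbl g w = i0 - 1 := by
        rw [lbl, if_pos (by exact ⟨h1.1, h1.2⟩)]
      have hlt : i0 - 1 < k - 1 := by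
        -- need `k ≥ 2` : since `0 < i0 < k`
        omega
      have hpart : (pOf g).part w = fib g (i0 - 1) := by
        rw [part_pOf_eq]
        ext u
        rw [mem_fib, Finset.mem_filter, hlbl]
        simp [eq_comm]
      have hbig : 1 < ((pOf g).part w).card := by
        rw [pOf_big_iff hg, hlbl]; exact hlt
      obtain ⟨w1, hw1min, -, -, hc1, hc1min⟩ := fib_min hg hlt
      have hw1w : w1 = w := by
        have he : w1.succ = w.succ := min_unique hg hc1 hc1min
          (by omega) (by
            intro u hu
            apply h1.2
            apply Fin.ext
            rw [hu]; omega)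
        exact Fin.succ_injective _ he
      have hmin : (↑w : WithTop (Fin n)) = ((pOf g).part w).min := by
        rw [hpart, hw1min, hw1w]
      rw [gnat_succ_big_min hbig hmin, hpart, rk_fib hg hlt]
      omega
    · by_cases h2 : ∃ u, (g u : ℕ) = i0 + 1 ∧ u < w.succ
      · have hlbl : lbl g w = i0 := by
          rw [lbl, if_neg h1, if_pos h2]
        have hlt : i0 < k - 1 := by
          obtain ⟨u, hu1, -⟩ := h2
          have := (g u).isLt
          omega
        have hpart : (pOf g).part w = fib g i0 := by
          rw [part_pOf_eq]
          ext u
          rw [mem_fib, Finset.mem_filter, hlbl]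
          simp [eq_comm]
        have hbig : 1 < ((pOf g).part w).card := by
          rw [pOf_big_iff hg, hlbl]; exact hlt
        obtain ⟨w1, hw1min, -, -, hc1, -⟩ := fib_min hg hlt
        have hne : (↑w : WithTop (Fin n)) ≠ ((pOf g).part w).min := by
          rw [hpart, hw1min]
          intro hcon
          have hww : w = w1 := by exact_mod_cast hcon
          rw [hww] at hi0
          omega
        rw [gnat_succ_big_nonmin hbig hne, hpart, rk_fib hg hlt]
      · have hlbl : lbl g w = k + (w : ℕ) := by
          rw [lbl, if_neg h1, if_neg h2]
        have hnotbig : ¬ 1 < ((pOf g).part w).card := by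
          rw [pOf_big_iff hg, hlbl]
          omega
        rw [gnat_succ_single hnotbig, nbelow_pOf hg]
        have hcong : (Finset.range (k-1)).filter
            (fun j => (fib g j).min < (↑w : WithTop (Fin n)))
            = (Finset.range (k-1)).filter (fun j => j < i0) := by
          apply Finset.filter_congr
          intro j hj
          rw [Finset.mem_range] at hj
          obtain ⟨wj, hwjmin, -, -, hcj, hcjmin⟩ := fib_min hg hj
          rw [hwjmin, WithTop.coe_lt_coe, ← Fin.succ_lt_succ_iff]
          constructor
          · -- if the leader of class j+1 is below w.succ then j < i0
            intro hlt
            by_contra hcon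
            push_neg at hcon
            -- j + 1 > i0 : two cases
            rcases Nat.lt_or_ge i0 j with hcase | hcase
            · -- j + 1 > i0 + 1 : then the leader of class i0+1 is even smaller,
              -- contradicting `¬h2`
              obtain ⟨vm, hvm, hvmmin⟩ := exists_cmin hg (show i0 + 1 < k by omega)
              have hvmlt : vm < wj.succ :=
                min_lt_of_class_lt hg hvm hvmmin hcj (by omega)
              exact h2 ⟨vm, hvm, lt_trans hvmlt hlt⟩
            · -- j = i0 (since j ≥ i0 and j < i0 is false) : leader of class i0+1 below w.succ
              have : j = i0 := by omega
              subst this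
              exact h2 ⟨wj.succ, hcj, hlt⟩
          · intro hji
            -- j < i0, so j + 1 ≤ i0 : the leader of class j+1 is below the minimum
            -- of class i0 which is ≤ w.succ... need: some element of class i0 < w.succ? no:
            -- leader of class i0 is < w.succ since w.succ is not the minimum (¬h1)
            obtain ⟨vm, hvm, hvmmin⟩ := exists_cmin hg (show i0 < k by omega)
            have hvmlt : vm < w.succ := by
              rcases Nat.eq_zero_or_pos i0 with hz | hpos
              · -- i0 = 0 : vm = 0 < w.succ?  vm is min of class 0 ∋ 0, so vm = 0
                have : vm ≤ 0 := hvmmin 0 (by rw [g_zero hg, hz])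
                have hvm0 : vm = 0 := le_antisymm this (Fin.zero_le _)
                rw [hvm0]
                exact Fin.succ_pos w
              · -- i0 > 0 : ¬h1 gives a smaller element in the class of w.succ
                push_neg at h1
                obtain ⟨u, hu1, hu2⟩ := h1 hpos
                have : vm ≤ u := hvmmin u (by rw [hu1])
                exact lt_of_le_of_lt this hu2
            rcases Nat.eq_or_lt_of_le (show j + 1 ≤ i0 by omega) with heq | hlt'
            · -- j+1 = i0 : wj.succ = vm
              have : wj.succ = vm := min_unique hg hcj hcjmin (by omega)
                (by intro u hu; exact hvmmin u (by omega))
              rw [this]; exact hvmlt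
            · -- j+1 < i0
              exact lt_trans (min_lt_of_class_lt hg hcj hcjmin hvm hlt') hvmlt
        rw [hcong, filter_range_card (by omega)]


/-- Round trip 2a: labels of `gP P` on big blocks -/
lemma lbl_gP_big (hP : (BigsP P).card = k - 1) (hk : 0 < k) {w : Fin n}
    (hbig : 1 < (P.part w).card) :
    lbl (gP P hP hk) w = rk P (P.part w) := by
  have hmem : P.part w ∈ BigsP P := part_mem_bigs hbig
  have hwp : w ∈ P.part w := P.mem_part (Finset.mem_univ w)
  have hrkc : rk P (P.part w) < k - 1 := by
    have := rk_lt_card hmem; omega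
  by_cases hmin : (↑w : WithTop (Fin n)) = (P.part w).min
  · have hgv : gnat P w.succ = rk P (P.part w) + 1 := gnat_succ_big_min hbig hmin
    have hlead : lead P (rk P (P.part w) + 1) = w.succ := by
      obtain ⟨b, hbm, hbrk, hbne, hblead⟩ :=
        lead_spec hP hk (i := rk P (P.part w) + 1) (by omega) (by omega)
      have hbe : b = P.part w := rk_inj hbm hmem (by omega)
      subst hbe
      rw [hblead]
      congr 1
      have h1 : (↑((P.part w).min' hbne) : WithTop (Fin n)) = (↑w : WithTop (Fin n)) := by
        rw [Finset.coe_min' hbne, ← hmin]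
      exact_mod_cast h1
    rw [lbl, if_pos ⟨by rw [gP_val, hgv]; omega, by
      intro u hu
      have huval : gnat P u = rk P (P.part w) + 1 := by
        have := congrArg (fun x : Fin k => (x : ℕ)) hu
        simpa [gP_val, hgv] using this
      calc w.succ = lead P (gnat P u) := by rw [huval, hlead]
        _ ≤ u := lead_le hP hk u⟩]
    rw [gP_val, hgv]
    omega
  · have hgv : gnat P w.succ = rk P (P.part w) := gnat_succ_big_nonmin hbig hmin
    set i := rk P (P.part w) with hidef
    rw [lbl, if_neg, if_pos]
    · rw [gP_val, hgv]
    · -- branch 2 : the leader of run i+1 is the minimum of this very block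
      refine ⟨lead P (i + 1), ?_, ?_⟩
      · rw [gP_val, gP_val, hgv]
        exact gnat_lead hP hk (by omega)
      · obtain ⟨b, hbm, hbrk, hbne, hblead⟩ :=
          lead_spec hP hk (i := i + 1) (by omega) (by omega)
        have hbe : b = P.part w := rk_inj hbm hmem (by omega)
        subst hbe
        rw [hblead, Fin.succ_lt_succ_iff]
        have hle : (P.part w).min' hbne ≤ w := Finset.min'_le _ _ hwp
        have hne : (P.part w).min' hbne ≠ w := by
          intro hcon
          apply hmin
          rw [← Finset.coe_min' hbne, hcon]
        exact lt_of_le_of_ne hle hne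
    · -- branch 1 fails : w.succ is not the minimum of its run
      rintro ⟨hpos, hall⟩
      rw [gP_val, hgv] at hpos
      have hlead : lead P i < w.succ := by
        obtain ⟨b, hbm, hbrk, hbne, hblead⟩ :=
          lead_spec hP hk (i := i) (by omega) (by omega)
        rw [hblead, Fin.succ_lt_succ_iff]
        have h1 : b.min < (P.part w).min := min_lt_of_rk_lt hbm hmem (by omega)
        have h2 : b.min < (↑w : WithTop (Fin n)) :=
          lt_of_lt_of_le h1 (min_le_of_mem hwp)
        rw [← Finset.coe_min' hbne, WithTop.coe_lt_coe] at h2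
        exact h2
      have h3 : w.succ ≤ lead P i := hall (lead P i) (by
        apply Fin.ext
        rw [gP_val, gP_val, hgv]
        exact gnat_lead hP hk (by omega))
      exact absurd h3 (not_le.mpr hlead)

/-- Round trip 2b: labels of `gP P` on singletons -/
lemma lbl_gP_single (hP : (BigsP P).card = k - 1) (hk : 0 < k) {w : Fin n}
    (hnb : ¬ 1 < (P.part w).card) :
    lbl (gP P hP hk) w = k + (w : ℕ) := by
  have hgv : gnat P w.succ = nbelow P w := gnat_succ_single hnb
  have hnle : nbelow P w ≤ k - 1 := by
    have := nbelow_le (P := P) w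
    omega
  rw [lbl, if_neg, if_neg]
  · -- branch2 fails
    rintro ⟨u, hu1, hu2⟩
    rw [gP_val, gP_val, hgv] at hu1
    have hbound : nbelow P w + 1 ≤ k - 1 := by
      have := gnat_lt hP hk u
      omega
    have hlead : lead P (nbelow P w + 1) ≤ u := by
      have h := lead_le hP hk u
      rwa [hu1] at h
    obtain ⟨b, hbm, hbrk, hbne, hblead⟩ :=
      lead_spec hP hk (i := nbelow P w + 1) (by omega) (by omega)
    have h1 : lead P (nbelow P w + 1) < w.succ := lt_of_le_of_lt hlead hu2
    rw [hblead, Fin.succ_lt_succ_iff] at h1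
    have h2 : b.min < (↑w : WithTop (Fin n)) := by
      rw [← Finset.coe_min' hbne, WithTop.coe_lt_coe]
      exact h1
    have := nbelow_ge hbm h2
    omega
  · -- branch1 fails
    rintro ⟨hpos, hall⟩
    rw [gP_val, hgv] at hpos
    obtain ⟨b, hbm, hbrk, hbne, hblead⟩ :=
      lead_spec hP hk (i := nbelow P w) (by omega) (by omega)
    have h2 : b.min < (↑w : WithTop (Fin n)) := by
      by_contra hcon
      push_neg at hcon
      have := nbelow_le_rk (P := P) (b := b) (w := w) hcon
      omega
    have hlead : lead P (nbelow P w) < w.succ := by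
      rw [hblead, Fin.succ_lt_succ_iff]
      rw [← Finset.coe_min' hbne, WithTop.coe_lt_coe] at h2
      exact h2
    have h3 : w.succ ≤ lead P (nbelow P w) := hall (lead P (nbelow P w)) (by
      apply Fin.ext
      rw [gP_val, gP_val, hgv]
      exact gnat_lead hP hk hnle)
    exact absurd h3 (not_le.mpr hlead)

lemma pOf_gP (hP : (BigsP P).card = k - 1) (hk : 0 < k) :
    pOf (gP P hP hk) = P := by
  set g' := gP P hP hk with hg'
  have hpart : ∀ a : Fin n, (pOf g').part a = P.part a := by
    intro a
    ext b
    rw [mem_part_pOf]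
    constructor
    · intro h
      by_cases hba : 1 < (P.part a).card
      · by_cases hbb : 1 < (P.part b).card
        · rw [lbl_gP_big hP hk hba, lbl_gP_big hP hk hbb] at h
          have : P.part a = P.part b :=
            rk_inj (part_mem_bigs hba) (part_mem_bigs hbb) h
          rw [this]
          exact P.mem_part (Finset.mem_univ b)
        · rw [lbl_gP_big hP hk hba, lbl_gP_single hP hk hbb] at h
          have := rk_lt_card (part_mem_bigs hba)
          omega
      · by_cases hbb : 1 < (P.part b).card
        · rw [lbl_gP_single hP hk hba, lbl_gP_big hP hk hbb] at h
          have := rk_lt_card (part_mem_bigs hbb)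
          omega
        · rw [lbl_gP_single hP hk hba, lbl_gP_single hP hk hbb] at h
          have hab : a = b := by
            apply Fin.ext
            omega
          rw [← hab]
          exact P.mem_part (Finset.mem_univ a)
    · intro hb
      have hpp : P.part b = P.part a :=
        P.part_eq_of_mem (P.part_mem.mpr (Finset.mem_univ a)) hb
      by_cases hba : 1 < (P.part a).card
      · rw [lbl_gP_big hP hk hba, lbl_gP_big hP hk (by rw [hpp]; exact hba), hpp]
      · have hone : (P.part a).card ≤ 1 := not_lt.mp hba
        have hba2 : b = a := by
          have ha : a ∈ P.part a := P.mem_part (Finset.mem_univ a)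
          have hcard := Finset.card_le_one.mp hone
          exact hcard b hb a ha
        rw [hba2]
  apply Finpartition.ext
  ext b
  constructor
  · intro hb
    obtain ⟨w, hw⟩ := (pOf g').nonempty_of_mem_parts hb
    have : (pOf g').part w = b := (pOf g').part_eq_of_mem hb hw
    rw [← this, hpart]
    exact P.part_mem.mpr (Finset.mem_univ w)
  · intro hb
    obtain ⟨w, hw⟩ := P.nonempty_of_mem_parts hb
    have : P.part w = b := P.part_eq_of_mem hb hw
    rw [← this, ← hpart]
    exact (pOf g').part_mem.mpr (Finset.mem_univ w)

lemma gP_pOf (hg : OK g) (h' : (BigsP (pOf g)).card = k - 1) (hk : 0 < k) :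
    gP (pOf g) h' hk = g := by
  funext v
  apply Fin.ext
  rw [gP_val, gnat_pOf hg]

lemma partitions_card_eq_G (hk : 0 < k) :
    ((Finset.univ : Finset (Finpartition (Finset.univ : Finset (Fin n)))).filter
      (fun P => (BigsP P).card = k - 1)).card = (G (n+1) k).card := by
  exact Finset.card_bij'
    (fun P hP => gP P (Finset.mem_filter.mp hP).2 hk)
    (fun g _ => pOf g)
    (fun P hP => Finset.mem_filter.mpr
      ⟨Finset.mem_univ _, gP_ok (Finset.mem_filter.mp hP).2 hk⟩)
    (fun g hg => Finset.mem_filter.mpr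
      ⟨Finset.mem_univ _, card_bigs_pOf (Finset.mem_filter.mp hg).2⟩)
    (fun P hP => pOf_gP (Finset.mem_filter.mp hP).2 hk)
    (fun g hg => gP_pOf (Finset.mem_filter.mp hg).2 _ hk)

end PartitionSide

end FlatAux

/-- For all integers `n ≥ 1` and `k ≥ 1`, the number of set partitions of `[n]` having
exactly `k - 1` blocks of size greater than `1` equals `f_{n+1,k}`, the number of flattened
partitions over `[n+1]` having exactly `k` runs. -/


theorem card_partitions_big_blocks_eq_f (n k : ℕ) (hn : 1 ≤ n) (hk : 1 ≤ k) :
    Nat.card {P : Finpartition (Finset.univ : Finset (Fin n)) //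
      (P.parts.filter fun b => 1 < b.card).card = k - 1} = f (n + 1) k := by
  classical
  have h1 : Nat.card {P : Finpartition (Finset.univ : Finset (Fin n)) //
      (P.parts.filter fun b => 1 < b.card).card = k - 1}
      = ((Finset.univ : Finset (Finpartition (Finset.univ : Finset (Fin n)))).filter
          (fun P => (FlatAux.BigsP P).card = k - 1)).card := by
    rw [Nat.card_eq_fintype_card, Fintype.card_subtype]
    rfl
  rw [h1, FlatAux.partitions_card_eq_G hk, FlatAux.G_card_eq_flat (by omega)]
  rfl
end
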